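/- Every n-qubit Pauli assignment (for any n) of the doily hypergram S_d = ({1,…,15}, H_d, G_d) has contextuality degree 3. -/

import Mathlib

open scoped Classical
open Matrix

noncomputable section

/-- The space of `n`-qubit operators, realized as matrices indexed by
`Fin n → Fin 2` (the `n`-fold tensor-product index). -/
abbrev QMat (n : ℕ) := Matrix (Fin n → Fin 2) (Fin n → Fin 2) ℂ

/-- The four Pauli matrices `I, X, Y, Z`. -/
def pauliMat : Fin 4 → Matrix (Fin 2) (Fin 2) ℂ
  | ⟨0, _⟩ => 1
  | ⟨1, _⟩ => !![0, 1; 1, 0]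
  | ⟨2, _⟩ => !![0, -Complex.I; Complex.I, 0]
  | ⟨3, _⟩ => !![1, 0; 0, -1]

/-- The `n`-fold Kronecker (tensor) product `G₁ ⊗ ⋯ ⊗ Gₙ` of the Pauli matrices
selected by `g : Fin n → Fin 4`, as a matrix indexed by `Fin n → Fin 2`. -/
def nPauli {n : ℕ} (g : Fin n → Fin 4) : QMat n :=
  Matrix.of fun r c => ∏ k, pauliMat (g k) (r k) (c k)

/-- `M` is an `n`-qubit Pauli observable. -/
def IsPauliObs (n : ℕ) (M : QMat n) : Prop := ∃ g : Fin n → Fin 4, M = nPauli g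

/-- `I^⊗n`, the `n`-fold tensor product of the identity. -/
def idN (n : ℕ) : QMat n := nPauli (fun _ => ⟨0, by omega⟩)

/-- Product of `f` over a finite set of naturals, taken in increasing order
(well-defined without commutativity; agrees with the unordered product when the
factors pairwise commute). -/
def natFinsetProd {M : Type*} [Monoid M] (s : Finset ℕ) (f : ℕ → M) : M :=
  ((s.sort (· ≤ ·)).map f).prod

/-- `(V,H,G)` is a hypergram: `V` a nonempty finite vertex set, `H` a set of
nonempty hyperedges covering `V`, `G` a set of 2-element edges on `V` forming a
simple reduced graph, no edge of `G` being contained in a hyperedge of `H`. -/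
def IsHypergram (V : Finset ℕ) (H G : Finset (Finset ℕ)) : Prop :=
  V.Nonempty ∧
  (∀ h ∈ H, h ⊆ V ∧ h.Nonempty) ∧
  (∀ v ∈ V, ∃ h ∈ H, v ∈ h) ∧
  (∀ e ∈ G, e ⊆ V ∧ e.card = 2) ∧
  (∀ v ∈ V, ∃ e ∈ G, v ∈ e) ∧
  (∀ v ∈ V, ∀ w ∈ V,
    (∀ u ∈ V, (({v, u} : Finset ℕ) ∈ G ↔ ({w, u} : Finset ℕ) ∈ G)) → v = w) ∧
  (∀ e ∈ G, ∀ h ∈ H, ¬ e ⊆ h)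

/-- `α` is an `n`-qubit Pauli assignment of the hypergram `(V,H,G)`. -/
def IsPauliAssignment (V : Finset ℕ) (H G : Finset (Finset ℕ)) (n : ℕ)
    (α : ℕ → QMat n) : Prop :=
  (∀ v ∈ V, IsPauliObs n (α v)) ∧
  (∀ v ∈ V, α v ≠ idN n) ∧
  (∀ v₁ ∈ V, ∀ v₂ ∈ V, α v₁ = α v₂ → v₁ = v₂) ∧
  (∀ v₁ ∈ V, ∀ v₂ ∈ V, v₁ ≠ v₂ →
    (α v₁ * α v₂ = -(α v₂ * α v₁) ↔ ({v₁, v₂} : Finset ℕ) ∈ G)) ∧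
  (∀ h ∈ H, natFinsetProd h α = idN n ∨ natFinsetProd h α = -(idN n))

/-- The sign `sgn_α(h) ∈ {−1,1}` of a hyperedge `h`: `∏_{v∈h} α(v) = sgn_α(h)·I^⊗n`. -/
def quantumSgn {n : ℕ} (α : ℕ → QMat n) (h : Finset ℕ) : ℤ :=
  if natFinsetProd h α = idN n then 1 else -1

/-- The sign `sgn_a(h) = ∏_{v∈h} a(v)` of a hyperedge for a classical assignment. -/
def classicalSgn (a : ℕ → ℤ) (h : Finset ℕ) : ℤ := ∏ v ∈ h, a v

/-- The contextuality degree of a Pauli assignment: the minimum over classical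
assignments `a : V → {−1,1}` of the number of hyperedges whose signs differ. -/
def contextualityDegree {n : ℕ} (H : Finset (Finset ℕ)) (α : ℕ → QMat n) : ℕ :=
  sInf { d : ℕ | ∃ a : ℕ → ℤ, (∀ v, a v = 1 ∨ a v = -1) ∧
    d = (H.filter (fun h => quantumSgn α h ≠ classicalSgn a h)).card }

/-- The context (incidence) matrix of a hypergram over 𝔽₂. -/
def contextMatrix (V : Finset ℕ) (H : Finset (Finset ℕ)) :
    Matrix {h // h ∈ H} {v // v ∈ V} (ZMod 2) :=
  Matrix.of fun h v => if v.1 ∈ h.1 then 1 else 0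

/-- The anticommutation (adjacency) matrix of a hypergram over 𝔽₂. -/
def anticommMatrix (V : Finset ℕ) (G : Finset (Finset ℕ)) :
    Matrix {v // v ∈ V} {v // v ∈ V} (ZMod 2) :=
  Matrix.of fun i j => if ({i.1, j.1} : Finset ℕ) ∈ G then 1 else 0

/-- The standard symplectic form on `𝔽₂^{2n}`:
`⟨x,y⟩ = Σ_{k=1}^{n} (x_{2k−1} y_{2k} + x_{2k} y_{2k−1})`. -/
def sympForm (n : ℕ) (x y : Fin (2 * n) → ZMod 2) : ZMod 2 :=
  ∑ k : Fin n,
    (x ⟨2 * k.1, by have := k.2; omega⟩ * y ⟨2 * k.1 + 1, by have := k.2; omega⟩ +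
     x ⟨2 * k.1 + 1, by have := k.2; omega⟩ * y ⟨2 * k.1, by have := k.2; omega⟩)

/-- The single-qubit encoding `ψ(I)=(0,0), ψ(X)=(0,1), ψ(Y)=(1,1), ψ(Z)=(1,0)`. -/
def psi4 : Fin 4 → (ZMod 2) × (ZMod 2)
  | ⟨0, _⟩ => (0, 0)
  | ⟨1, _⟩ => (0, 1)
  | ⟨2, _⟩ => (1, 1)
  | ⟨3, _⟩ => (1, 0)

/-- The encoding `ψ` of an `n`-qubit Pauli observable (given by its tensor
factors `g`) as a vector of `𝔽₂^{2n}`, concatenating the per-factor encodings. -/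
def psiVec {n : ℕ} (g : Fin n → Fin 4) : Fin (2 * n) → ZMod 2 := fun idx =>
  if idx.1 % 2 = 0 then (psi4 (g ⟨idx.1 / 2, by have := idx.2; omega⟩)).1
  else (psi4 (g ⟨idx.1 / 2, by have := idx.2; omega⟩)).2

/-- All pairs of elements of `S` commute. -/
def PairComm {n : ℕ} (S : Finset (QMat n)) : Prop := ∀ a ∈ S, ∀ b ∈ S, a * b = b * a

/-- The (well-defined) product of a finite set of pairwise commuting matrices. -/
def commProd {n : ℕ} (S : Finset (QMat n)) (h : PairComm S) : QMat n :=
  S.noncommProd id (fun a ha b hb _ => h a ha b hb)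

/-- Pairwise commutation is inherited by subsets. -/
def pairCommOfSubset {n : ℕ} {S T : Finset (QMat n)} (hST : S ⊆ T) (h : PairComm T) :
    PairComm S := fun a ha b hb => h a (hST ha) b (hST hb)

/-- `Q` (pairwise commuting) is independent: no nonempty subset has product `±I^⊗n`. -/
def IsIndep {n : ℕ} (Q : Finset (QMat n)) (hQ : PairComm Q) : Prop :=
  ∀ S : Finset (QMat n), ∀ (hS : S ⊆ Q), S.Nonempty →
    commProd S (pairCommOfSubset hS hQ) ≠ idN n ∧
    commProd S (pairCommOfSubset hS hQ) ≠ -(idN n)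

/-- The vertex set `{1, …, 15}`. -/
def V15 : Finset ℕ := Finset.Icc 1 15

/-- The 15 lines of the doily. -/
def doilyLines : Finset (Finset ℕ) :=
  { {1,2,3}, {1,8,9}, {1,10,11}, {2,4,6}, {2,5,7}, {3,12,15}, {3,13,14},
    {4,8,12}, {4,10,14}, {5,8,13}, {5,10,15}, {6,9,15}, {6,11,13},
    {7,9,14}, {7,11,12} }

/-- The 10 lines of the two-spread `H_{2s}`. -/
def twoSpreadLines : Finset (Finset ℕ) :=
  { {1,2,3}, {1,10,11}, {2,4,6}, {3,13,14}, {4,8,12}, {5,8,13}, {5,10,15},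
    {6,9,15}, {7,9,14}, {7,11,12} }

/-- The anticommutation graph `G_d = G_{2s}`: pairs of distinct vertices not on a
common doily line. -/
def doilyG : Finset (Finset ℕ) :=
  (V15.powersetCard 2).filter (fun e => ∀ h ∈ doilyLines, ¬ e ⊆ h)



-- ======================= auxiliary development =======================

def ncPairs : List (ℕ × ℕ) := [(1,4), (1,5), (1,6), (1,7), (1,12), (1,13), (1,14), (1,15), (2,8), (2,9), (2,10), (2,11), (2,12), (2,13), (2,14), (2,15), (3,4), (3,5), (3,6), (3,7), (3,8), (3,9), (3,10), (3,11), (4,5), (4,7), (4,9), (4,11), (4,13), (4,15), (5,6), (5,9), (5,11), (5,12), (5,14), (6,7), (6,8), (6,10), (6,12), (6,14), (7,8), (7,10), (7,13), (7,15), (8,10), (8,11), (8,14), (8,15), (9,10), (9,11), (9,12), (9,13), (10,12), (10,13), (11,14), (11,15), (12,13), (12,14), (13,15), (14,15)]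

def epsd (a b : ℕ) : ℤ := if (min a b, max a b) ∈ ncPairs then -1 else 1

lemma epsd_symm (a b : ℕ) : epsd a b = epsd b a := by
  unfold epsd; rw [Nat.min_comm, Nat.max_comm]

def pullSign (ε : ℕ → ℕ → ℤ) (a : ℕ) : List ℕ → ℤ
  | [] => 1
  | b :: l => if a = b then 1 else ε a b * pullSign ε a l

def wredF (ε : ℕ → ℕ → ℤ) : ℕ → List ℕ → ℤ × List ℕ
  | 0, l => (1, l)
  | _+1, [] => (1, [])
  | k+1, a :: l =>
    if a ∈ l then
      ((pullSign ε a l) * (wredF ε k (l.erase a)).1, (wredF ε k (l.erase a)).2)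
    else ((wredF ε k l).1, a :: (wredF ε k l).2)

section words
variable {n : ℕ} (f : ℕ → QMat n) (ε : ℕ → ℕ → ℤ) (S : Finset ℕ)
variable (hsym : ∀ a b, ε a b = ε b a)
variable (hc : ∀ a ∈ S, ∀ b ∈ S, f a * f b = (ε a b : ℂ) • (f b * f a))
variable (hsq : ∀ a ∈ S, f a * f a = 1)

include hsym hc in
lemma pull_lemma : ∀ (l : List ℕ) (a : ℕ), a ∈ S → (∀ v ∈ l, v ∈ S) → a ∈ l →
    (l.map f).prod = ((pullSign ε a l : ℤ) : ℂ) • (f a * ((l.erase a).map f).prod) := by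
  intro l
  induction l with
  | nil => intro a _ _ h; simp at h
  | cons b t ih =>
    intro a ha hl hal
    by_cases hab : a = b
    · subst hab
      simp [pullSign, List.erase_cons_head]
    · have hat : a ∈ t := by
        rcases List.mem_cons.mp hal with h | h
        · exact absurd h hab
        · exact h
      have hb : b ∈ S := hl b List.mem_cons_self
      have ht : ∀ v ∈ t, v ∈ S := fun v hv => hl v (List.mem_cons_of_mem b hv)
      rw [List.erase_cons_tail (by simp [Ne.symm hab])]
      simp only [List.map_cons, List.prod_cons]
      rw [ih a ha ht hat]
      rw [mul_smul_comm, ← mul_assoc, hc b hb a ha, hsym b a]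
      simp only [pullSign, if_neg hab]
      rw [smul_mul_assoc, smul_smul, mul_assoc]
      push_cast
      ring_nf

include hsym hc hsq in
lemma wred_spec : ∀ (k : ℕ) (l : List ℕ), l.length ≤ k → (∀ v ∈ l, v ∈ S) →
    (l.map f).prod = ((wredF ε k l).1 : ℂ) • (((wredF ε k l).2).map f).prod := by
  intro k
  induction k with
  | zero => intro l _ _; simp [wredF]
  | succ k ih =>
    intro l hlen hmem
    match l with
    | [] => simp [wredF]
    | a :: t =>
      have ha : a ∈ S := hmem a List.mem_cons_self
      have ht : ∀ v ∈ t, v ∈ S := fun v hv => hmem v (List.mem_cons_of_mem a hv)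
      by_cases hat : a ∈ t
      · simp only [wredF, if_pos hat]
        have hlen' : (t.erase a).length ≤ k := by
          have := List.length_erase_of_mem hat
          simp at hlen
          omega
        have hmem' : ∀ v ∈ t.erase a, v ∈ S := fun v hv => ht v (List.mem_of_mem_erase hv)
        simp only [List.map_cons, List.prod_cons]
        rw [pull_lemma f ε S hsym hc t a ha ht hat]
        rw [mul_smul_comm, ← mul_assoc, hsq a ha, one_mul]
        rw [ih (t.erase a) hlen' hmem']
        rw [smul_smul]
        push_cast
        ring_nf
      · simp only [wredF, if_neg hat]
        simp only [List.map_cons, List.prod_cons]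
        rw [ih t (by simp at hlen; omega) ht]
        rw [mul_smul_comm]

end words

-- ---------------- Pauli matrix algebra ----------------

def psign : Fin 4 → Fin 4 → ℤ := fun a b =>
  if a = 0 ∨ b = 0 ∨ a = b then 1 else -1

lemma pauli_sq (a : Fin 4) : pauliMat a * pauliMat a = 1 := by
  fin_cases a <;>
    · simp only [pauliMat]
      ext i j
      fin_cases i <;> fin_cases j <;>
        simp [Matrix.mul_apply, Fin.sum_univ_two, Matrix.one_apply] <;> ring_nf <;>
        simp [Complex.I_sq]

lemma pauli_comm (a b : Fin 4) :
    pauliMat a * pauliMat b = (psign a b : ℂ) • (pauliMat b * pauliMat a) := by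
  fin_cases a <;> fin_cases b <;>
    simp only [pauliMat, psign] <;> norm_num <;>
    (ext i j; fin_cases i <;> fin_cases j <;>
      simp [Matrix.mul_apply, Fin.sum_univ_two] <;> ring)

lemma psign_pm (a b : Fin 4) : psign a b = 1 ∨ psign a b = -1 := by
  unfold psign; split <;> simp

lemma nPauli_mul {n : ℕ} (g g' : Fin n → Fin 4) :
    nPauli g * nPauli g' =
      Matrix.of fun r c => ∏ k, (pauliMat (g k) * pauliMat (g' k)) (r k) (c k) := by
  ext r c
  simp only [Matrix.mul_apply, nPauli, Matrix.of_apply]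
  rw [Fintype.prod_sum]
  simp [Finset.prod_mul_distrib]

lemma idN_eq_one (n : ℕ) : idN n = 1 := by
  ext r c
  simp only [idN, nPauli, Matrix.of_apply]
  show (∏ k : Fin n, (1 : Matrix (Fin 2) (Fin 2) ℂ) (r k) (c k)) = _
  by_cases h : r = c
  · simp [h, Matrix.one_apply]
  · simp only [Matrix.one_apply]
    rw [if_neg h]
    obtain ⟨k, hk⟩ := Function.ne_iff.mp h
    exact Finset.prod_eq_zero (Finset.mem_univ k) (by simp [hk])

lemma entry_one {n : ℕ} (r c : Fin n → Fin 2) :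
    (∏ k, (1 : Matrix (Fin 2) (Fin 2) ℂ) (r k) (c k)) = (1 : QMat n) r c := by
  by_cases h : r = c
  · subst h; simp [Matrix.one_apply]
  · rw [Matrix.one_apply, if_neg h]
    obtain ⟨k, hk⟩ := Function.ne_iff.mp h
    exact Finset.prod_eq_zero (Finset.mem_univ k) (by simp [Matrix.one_apply, hk])

lemma nPauli_sq {n : ℕ} (g : Fin n → Fin 4) : nPauli g * nPauli g = 1 := by
  rw [nPauli_mul]
  ext r c
  simp only [Matrix.of_apply, pauli_sq]
  exact entry_one r c

lemma nPauli_comm {n : ℕ} (g g' : Fin n → Fin 4) :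
    nPauli g * nPauli g' =
      ((∏ k, psign (g k) (g' k) : ℤ) : ℂ) • (nPauli g' * nPauli g) := by
  rw [nPauli_mul, nPauli_mul]
  ext r c
  simp only [Matrix.of_apply, Matrix.smul_apply, smul_eq_mul]
  rw [Finset.prod_congr rfl (fun k _ =>
    show (pauliMat (g k) * pauliMat (g' k)) (r k) (c k)
      = ((psign (g k) (g' k) : ℂ)) * (pauliMat (g' k) * pauliMat (g k)) (r k) (c k) from by
        rw [pauli_comm (g k) (g' k)]; rfl)]
  rw [Finset.prod_mul_distrib]
  push_cast
  ring

lemma prod_psign_pm {n : ℕ} (g g' : Fin n → Fin 4) :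
    (∏ k, psign (g k) (g' k)) = 1 ∨ (∏ k, psign (g k) (g' k)) = -1 := by
  refine Finset.prod_induction _ (fun x => x = 1 ∨ x = -1) ?_ (by left; rfl)
    (fun k _ => psign_pm _ _)
  rintro x y (rfl | rfl) (rfl | rfl) <;> norm_num

lemma smul_one_inj {n : ℕ} (z z' : ℂ) (h : z • (1 : QMat n) = z' • (1 : QMat n)) : z = z' := by
  have h2 := congrFun (congrFun h (fun _ => 0)) (fun _ => 0)
  simpa [Matrix.smul_apply, Matrix.one_apply] using h2

-- ---------------- sign/bit bookkeeping ----------------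

def bitZ (x : ℤ) : ZMod 2 := if x = 1 then 0 else 1

lemma two_zmod : (2 : ZMod 2) = 0 := by decide

lemma zmod_cases (x : ZMod 2) : x = 0 ∨ x = 1 := by revert x; decide

lemma bit_mul {x y : ℤ} (hx : x = 1 ∨ x = -1) (hy : y = 1 ∨ y = -1) :
    bitZ (x * y) = bitZ x + bitZ y := by
  rcases hx with rfl | rfl <;> rcases hy with rfl | rfl <;> simp [bitZ] <;> decide

lemma pm_mul {x y : ℤ} (hx : x = 1 ∨ x = -1) (hy : y = 1 ∨ y = -1) :
    x * y = 1 ∨ x * y = -1 := by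
  rcases hx with rfl | rfl <;> rcases hy with rfl | rfl <;> norm_num

lemma pm_list : ∀ (l : List ℤ), (∀ x ∈ l, x = 1 ∨ x = -1) → l.prod = 1 ∨ l.prod = -1 := by
  intro l
  induction l with
  | nil => intro _; left; simp
  | cons x t ih =>
    intro hmem
    rw [List.prod_cons]
    exact pm_mul (hmem x List.mem_cons_self)
      (ih (fun y hy => hmem y (List.mem_cons_of_mem x hy)))

lemma bit_prod_list : ∀ (l : List ℤ), (∀ x ∈ l, x = 1 ∨ x = -1) →
    bitZ l.prod = (l.map bitZ).sum := by
  intro l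
  induction l with
  | nil => intro _; simp [bitZ]
  | cons x t ih =>
    intro hmem
    rw [List.prod_cons, List.map_cons, List.sum_cons]
    rw [bit_mul (hmem x List.mem_cons_self)
      (pm_list t (fun y hy => hmem y (List.mem_cons_of_mem x hy)))]
    rw [ih (fun y hy => hmem y (List.mem_cons_of_mem x hy))]

lemma bit_prod_neg (l : List ℤ) (hmem : ∀ x ∈ l, x = 1 ∨ x = -1) (h : l.prod = -1) :
    (l.map bitZ).sum = 1 := by
  rw [← bit_prod_list l hmem, h]
  norm_num [bitZ]

lemma pm_ne_iff {x y : ℤ} (hx : x = 1 ∨ x = -1) (hy : y = 1 ∨ y = -1) :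
    x ≠ y ↔ bitZ x + bitZ y = 1 := by
  rcases hx with rfl | rfl <;> rcases hy with rfl | rfl <;> simp [bitZ] <;> decide

lemma pm_eq_iff {x y : ℤ} (hx : x = 1 ∨ x = -1) (hy : y = 1 ∨ y = -1) :
    x = y ↔ bitZ x + bitZ y = 0 := by
  rcases hx with rfl | rfl <;> rcases hy with rfl | rfl <;> simp [bitZ] <;> decide

lemma sort3 {a b c : ℕ} (h1 : a < b) (h2 : b < c) :
    ({a,b,c} : Finset ℕ).sort (· ≤ ·) = [a,b,c] := by
  rw [Finset.sort_insert, Finset.sort_insert, Finset.sort_singleton]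
  · intro x hx; simp at hx; omega
  · simp; omega
  · intro x hx; simp at hx; rcases hx with h | h <;> omega
  · simp; omega

lemma csgn3 (a : ℕ → ℤ) {x y z : ℕ} (h1 : x < y) (h2 : y < z) :
    classicalSgn a ({x,y,z} : Finset ℕ) = a x * (a y * a z) := by
  unfold classicalSgn
  rw [Finset.prod_insert (by simp; omega), Finset.prod_insert (by simp; omega),
    Finset.prod_singleton]

lemma csgn_pm (a : ℕ → ℤ) (hpm : ∀ v, a v = 1 ∨ a v = -1) (h : Finset ℕ) :
    classicalSgn a h = 1 ∨ classicalSgn a h = -1 := by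
  unfold classicalSgn
  refine Finset.prod_induction _ (fun x => x = 1 ∨ x = -1) ?_ (by left; rfl)
    (fun v _ => hpm v)
  rintro x y (rfl | rfl) (rfl | rfl) <;> norm_num

lemma bit_csgn3 (a : ℕ → ℤ) (hpm : ∀ v, a v = 1 ∨ a v = -1) {x y z : ℕ}
    (h1 : x < y) (h2 : y < z) :
    bitZ (classicalSgn a ({x,y,z} : Finset ℕ)) = bitZ (a x) + bitZ (a y) + bitZ (a z) := by
  rw [csgn3 a h1 h2, bit_mul (hpm x) (pm_mul (hpm y) (hpm z)), bit_mul (hpm y) (hpm z)]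
  ring

lemma sum_parity (T : Finset (Finset ℕ)) (m : Finset ℕ → ZMod 2)
    (h : ∑ h0 ∈ T, m h0 = 1) :
    (((T.filter (fun h0 => m h0 = 1)).card : ℕ) : ZMod 2) = 1 := by
  classical
  rw [← Finset.sum_filter_add_sum_filter_not T (fun h0 => m h0 = 1)] at h
  have e1 : ∑ h0 ∈ T.filter (fun h0 => m h0 = 1), m h0
      = ((T.filter (fun h0 => m h0 = 1)).card : ZMod 2) := by
    rw [Finset.sum_congr rfl (fun x hx => (Finset.mem_filter.mp hx).2)]
    simp
  have e2 : ∑ h0 ∈ T.filter (fun h0 => ¬ (m h0 = 1)), m h0 = 0 := by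
    refine Finset.sum_eq_zero (fun x hx => ?_)
    rcases zmod_cases (m x) with h' | h'
    · exact h'
    · exact absurd h' (Finset.mem_filter.mp hx).2
  rw [e1, e2, add_zero] at h
  exact h

-- table of the classical correction assignment (bits), as a function of the
-- quantum line bits
def bbF (w : Finset ℕ → ZMod 2) : ℕ → ZMod 2 := fun v =>
  if v = 1 then w {1,10,11} else
  if v = 2 then w {1,2,3} + w {1,10,11} + w {3,13,14} else
  if v = 3 then w {3,13,14} else
  if v = 4 then w {4,10,14} else
  if v = 5 then (w {3,12,15} + 1) + w {3,13,14} + w {4,8,12} + w {4,10,14} + w {5,8,13} else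
  if v = 6 then w {1,2,3} + w {1,10,11} + w {2,4,6} + w {3,13,14} + w {4,10,14} else
  if v = 7 then w {1,2,3} + w {1,10,11} + w {2,5,7} + (w {3,12,15} + 1) + w {4,8,12} + w {4,10,14} + w {5,8,13} else
  if v = 8 then (w {3,12,15} + 1) + w {3,13,14} + w {4,8,12} + w {4,10,14} else
  if v = 9 then w {1,8,9} + w {1,10,11} + (w {3,12,15} + 1) + w {3,13,14} + w {4,8,12} + w {4,10,14} else
  if v = 12 then (w {3,12,15} + 1) + w {3,13,14}
  else 0

def aaF (w : Finset ℕ → ZMod 2) : ℕ → ℤ := fun v => if bbF w v = 0 then 1 else -1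

lemma aaF_pm (w : Finset ℕ → ZMod 2) (v : ℕ) : aaF w v = 1 ∨ aaF w v = -1 := by
  unfold aaF; split <;> simp

lemma bit_aaF (w : Finset ℕ → ZMod 2) (v : ℕ) : bitZ (aaF w v) = bbF w v := by
  unfold aaF
  split
  · rename_i h; rw [h]; norm_num [bitZ]
  · rename_i h
    rcases zmod_cases (bbF w v) with h' | h'
    · exact absurd h' h
    · rw [h']; norm_num [bitZ]

-- the six spread complements
def T0 : Finset (Finset ℕ) := {{1,8,9}, {1,10,11}, {2,4,6}, {2,5,7}, {3,12,15}, {3,13,14}, {4,10,14}, {5,8,13}, {6,9,15}, {7,11,12}}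
def T1 : Finset (Finset ℕ) := {{1,8,9}, {1,10,11}, {2,4,6}, {2,5,7}, {3,12,15}, {3,13,14}, {4,8,12}, {5,10,15}, {6,11,13}, {7,9,14}}
def T2 : Finset (Finset ℕ) := {{1,2,3}, {1,10,11}, {2,5,7}, {3,12,15}, {4,8,12}, {4,10,14}, {5,8,13}, {6,9,15}, {6,11,13}, {7,9,14}}
def T3 : Finset (Finset ℕ) := {{1,2,3}, {1,10,11}, {2,4,6}, {3,13,14}, {4,8,12}, {5,8,13}, {5,10,15}, {6,9,15}, {7,9,14}, {7,11,12}}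
def T4 : Finset (Finset ℕ) := {{1,2,3}, {1,8,9}, {2,5,7}, {3,13,14}, {4,8,12}, {4,10,14}, {5,10,15}, {6,9,15}, {6,11,13}, {7,11,12}}
def T5 : Finset (Finset ℕ) := {{1,2,3}, {1,8,9}, {2,4,6}, {3,12,15}, {4,10,14}, {5,8,13}, {5,10,15}, {6,11,13}, {7,9,14}, {7,11,12}}

lemma Tsub : (∀ h ∈ T0, h ∈ doilyLines) ∧ (∀ h ∈ T1, h ∈ doilyLines) ∧ (∀ h ∈ T2, h ∈ doilyLines) ∧ (∀ h ∈ T3, h ∈ doilyLines) ∧ (∀ h ∈ T4, h ∈ doilyLines) ∧ (∀ h ∈ T5, h ∈ doilyLines) := by decide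

lemma dec1 : ∀ h ∈ doilyLines, h ∉ T0 ∨ h ∉ T1 ∨ h ∉ T2 ∨ h ∉ T3 ∨ h ∉ T4 ∨ h ∉ T5 := by decide

lemma dec2 : ∀ h1 ∈ doilyLines, ∀ h2 ∈ doilyLines, (h1 ∈ T0 ∧ h2 ∈ T0) ∨ (h1 ∈ T1 ∧ h2 ∈ T1) ∨ (h1 ∈ T2 ∧ h2 ∈ T2) ∨ (h1 ∈ T3 ∧ h2 ∈ T3) ∨ (h1 ∈ T4 ∧ h2 ∈ T4) ∨ (h1 ∈ T5 ∧ h2 ∈ T5) := by decide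

lemma eps_iff : ∀ a ∈ V15, ∀ b ∈ V15, a ≠ b → (({a,b} : Finset ℕ) ∈ doilyG ↔ epsd a b = -1) := by decide

lemma epsd_pm (a b : ℕ) : epsd a b = 1 ∨ epsd a b = -1 := by unfold epsd; split <;> simp

lemma epsd_diag (v : ℕ) : epsd v v = 1 := by
  unfold epsd
  rw [if_neg]
  simp only [ncPairs, List.mem_cons, List.not_mem_nil, or_false, Prod.mk.injEq, min_self, max_self]
  omega

lemma wredc0 : wredF epsd 30 [1, 8, 9, 1, 10, 11, 2, 4, 6, 2, 5, 7, 3, 12, 15, 3, 13, 14, 4, 10, 14, 5, 8, 13, 6, 9, 15, 7, 11, 12] = (-1, []) := by decide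
lemma wredc1 : wredF epsd 30 [1, 8, 9, 1, 10, 11, 2, 4, 6, 2, 5, 7, 3, 12, 15, 3, 13, 14, 4, 8, 12, 5, 10, 15, 6, 11, 13, 7, 9, 14] = (-1, []) := by decide
lemma wredc2 : wredF epsd 30 [1, 2, 3, 1, 10, 11, 2, 5, 7, 3, 12, 15, 4, 8, 12, 4, 10, 14, 5, 8, 13, 6, 9, 15, 6, 11, 13, 7, 9, 14] = (-1, []) := by decide
lemma wredc3 : wredF epsd 30 [1, 2, 3, 1, 10, 11, 2, 4, 6, 3, 13, 14, 4, 8, 12, 5, 8, 13, 5, 10, 15, 6, 9, 15, 7, 9, 14, 7, 11, 12] = (-1, []) := by decide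
lemma wredc4 : wredF epsd 30 [1, 2, 3, 1, 8, 9, 2, 5, 7, 3, 13, 14, 4, 8, 12, 4, 10, 14, 5, 10, 15, 6, 9, 15, 6, 11, 13, 7, 11, 12] = (-1, []) := by decide
lemma wredc5 : wredF epsd 30 [1, 2, 3, 1, 8, 9, 2, 4, 6, 3, 12, 15, 4, 10, 14, 5, 8, 13, 5, 10, 15, 6, 11, 13, 7, 9, 14, 7, 11, 12] = (-1, []) := by decide

lemma natProd_sgn {n : ℕ} (α : ℕ → QMat n) (h : Finset ℕ)
    (hor : natFinsetProd h α = idN n ∨ natFinsetProd h α = -(idN n)) :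
    natFinsetProd h α = ((quantumSgn α h : ℤ) : ℂ) • (1 : QMat n) := by
  unfold quantumSgn
  by_cases hp : natFinsetProd h α = idN n
  · rw [if_pos hp, hp, idN_eq_one]; norm_num
  · rw [if_neg hp]
    rcases hor with h' | h'
    · exact absurd h' hp
    · rw [h', idN_eq_one]; norm_num

lemma qsgn_pm {n : ℕ} (α : ℕ → QMat n) (h : Finset ℕ) :
    quantumSgn α h = 1 ∨ quantumSgn α h = -1 := by
  unfold quantumSgn; split <;> simp

lemma lineStep {n : ℕ} (α : ℕ → QMat n) {x y z : ℕ} (h1 : x < y) (h2 : y < z)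
    (hor : natFinsetProd ({x,y,z} : Finset ℕ) α = idN n ∨
      natFinsetProd ({x,y,z} : Finset ℕ) α = -(idN n)) (R : QMat n) :
    α x * (α y * (α z * R)) = ((quantumSgn α ({x,y,z} : Finset ℕ) : ℤ) : ℂ) • R := by
  have e : α x * (α y * α z) = ((quantumSgn α ({x,y,z} : Finset ℕ) : ℤ) : ℂ) • 1 := by
    have e2 := natProd_sgn α ({x,y,z} : Finset ℕ) hor
    unfold natFinsetProd at e2
    rw [sort3 h1 h2] at e2
    simpa [mul_assoc] using e2
  calc α x * (α y * (α z * R)) = (α x * (α y * α z)) * R := by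
        rw [mul_assoc, mul_assoc]
    _ = (((quantumSgn α ({x,y,z} : Finset ℕ) : ℤ) : ℂ) • 1) * R := by rw [e]
    _ = _ := by rw [smul_mul_assoc, one_mul]


set_option maxHeartbeats 4000000

/-- Every Pauli assignment of the doily hypergram
`S_d = ({1,…,15}, H_d, G_d)` has contextuality degree 3. -/
theorem doily_contextuality_degree_three
    (n : ℕ) (α : ℕ → QMat n)
    (h : IsPauliAssignment V15 doilyLines doilyG n α) :
    contextualityDegree doilyLines α = 3 := by
  obtain ⟨hobs, hne0, hinj, hacm, hlines⟩ := h
  choose g hg using hobs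
  have Hsq : ∀ v ∈ V15, α v * α v = 1 := by
    intro v hv; rw [hg v hv]; exact nPauli_sq _
  have Hc : ∀ v ∈ V15, ∀ u ∈ V15, α v * α u = ((epsd v u : ℤ) : ℂ) • (α u * α v) := by
    intro v hv u hu
    by_cases hvu : v = u
    · subst hvu; rw [epsd_diag]; norm_num
    · rcases epsd_pm v u with he | he
      · rw [he]
        have hng : ({v,u} : Finset ℕ) ∉ doilyG := by
          intro hmem
          rw [(eps_iff v hv u hu hvu).mp hmem] at he
          norm_num at he
        have hnac : ¬ (α v * α u = -(α u * α v)) := by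
          intro hx; exact hng ((hacm v hv u hu hvu).mp hx)
        rcases prod_psign_pm (g v hv) (g u hu) with hs | hs
        · rw [hg v hv, hg u hu, nPauli_comm (g v hv) (g u hu), hs]; try norm_num
        · exfalso
          apply hnac
          rw [hg v hv, hg u hu, nPauli_comm (g v hv) (g u hu), hs]
          push_cast
          rw [neg_one_smul]
      · rw [he]
        have hgm : ({v,u} : Finset ℕ) ∈ doilyG := (eps_iff v hv u hu hvu).mpr he
        rw [(hacm v hv u hu hvu).mpr hgm]
        push_cast
        rw [neg_one_smul]
  have qA0 : (([1, 8, 9, 1, 10, 11, 2, 4, 6, 2, 5, 7, 3, 12, 15, 3, 13, 14, 4, 10, 14, 5, 8, 13, 6, 9, 15, 7, 11, 12] : List ℕ).map α).prod = ((-1 : ℤ) : ℂ) • (1 : QMat n) := by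
    rw [wred_spec α epsd V15 epsd_symm Hc Hsq 30 [1, 8, 9, 1, 10, 11, 2, 4, 6, 2, 5, 7, 3, 12, 15, 3, 13, 14, 4, 10, 14, 5, 8, 13, 6, 9, 15, 7, 11, 12] (by decide) (by decide), wredc0]
    norm_num
  have qB0 : (([1, 8, 9, 1, 10, 11, 2, 4, 6, 2, 5, 7, 3, 12, 15, 3, 13, 14, 4, 10, 14, 5, 8, 13, 6, 9, 15, 7, 11, 12] : List ℕ).map α).prod = (((quantumSgn α ({1,8,9} : Finset ℕ) * (quantumSgn α ({1,10,11} : Finset ℕ) * (quantumSgn α ({2,4,6} : Finset ℕ) * (quantumSgn α ({2,5,7} : Finset ℕ) * (quantumSgn α ({3,12,15} : Finset ℕ) * (quantumSgn α ({3,13,14} : Finset ℕ) * (quantumSgn α ({4,10,14} : Finset ℕ) * (quantumSgn α ({5,8,13} : Finset ℕ) * (quantumSgn α ({6,9,15} : Finset ℕ) * (quantumSgn α ({7,11,12} : Finset ℕ))))))))))) : ℤ) : ℂ) • (1 : QMat n) := by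
    simp only [List.map_cons, List.map_nil, List.prod_cons, List.prod_nil]
    rw [lineStep (x := 1) (y := 8) (z := 9) α (by norm_num) (by norm_num) (hlines {1,8,9} (by decide))]
    rw [lineStep (x := 1) (y := 10) (z := 11) α (by norm_num) (by norm_num) (hlines {1,10,11} (by decide))]
    rw [lineStep (x := 2) (y := 4) (z := 6) α (by norm_num) (by norm_num) (hlines {2,4,6} (by decide))]
    rw [lineStep (x := 2) (y := 5) (z := 7) α (by norm_num) (by norm_num) (hlines {2,5,7} (by decide))]
    rw [lineStep (x := 3) (y := 12) (z := 15) α (by norm_num) (by norm_num) (hlines {3,12,15} (by decide))]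
    rw [lineStep (x := 3) (y := 13) (z := 14) α (by norm_num) (by norm_num) (hlines {3,13,14} (by decide))]
    rw [lineStep (x := 4) (y := 10) (z := 14) α (by norm_num) (by norm_num) (hlines {4,10,14} (by decide))]
    rw [lineStep (x := 5) (y := 8) (z := 13) α (by norm_num) (by norm_num) (hlines {5,8,13} (by decide))]
    rw [lineStep (x := 6) (y := 9) (z := 15) α (by norm_num) (by norm_num) (hlines {6,9,15} (by decide))]
    rw [lineStep (x := 7) (y := 11) (z := 12) α (by norm_num) (by norm_num) (hlines {7,11,12} (by decide))]
    simp only [smul_smul]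
    congr 1
    push_cast
    ring
  have qS0 : quantumSgn α ({1,8,9} : Finset ℕ) * (quantumSgn α ({1,10,11} : Finset ℕ) * (quantumSgn α ({2,4,6} : Finset ℕ) * (quantumSgn α ({2,5,7} : Finset ℕ) * (quantumSgn α ({3,12,15} : Finset ℕ) * (quantumSgn α ({3,13,14} : Finset ℕ) * (quantumSgn α ({4,10,14} : Finset ℕ) * (quantumSgn α ({5,8,13} : Finset ℕ) * (quantumSgn α ({6,9,15} : Finset ℕ) * (quantumSgn α ({7,11,12} : Finset ℕ)))))))))) = -1 := by
    have hq := smul_one_inj _ _ (qB0.symm.trans qA0)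
    exact_mod_cast hq
  have Wb0 : bitZ (quantumSgn α ({1,8,9} : Finset ℕ)) + (bitZ (quantumSgn α ({1,10,11} : Finset ℕ)) + (bitZ (quantumSgn α ({2,4,6} : Finset ℕ)) + (bitZ (quantumSgn α ({2,5,7} : Finset ℕ)) + (bitZ (quantumSgn α ({3,12,15} : Finset ℕ)) + (bitZ (quantumSgn α ({3,13,14} : Finset ℕ)) + (bitZ (quantumSgn α ({4,10,14} : Finset ℕ)) + (bitZ (quantumSgn α ({5,8,13} : Finset ℕ)) + (bitZ (quantumSgn α ({6,9,15} : Finset ℕ)) + (bitZ (quantumSgn α ({7,11,12} : Finset ℕ))))))))))) = 1 := by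
    have hb := bit_prod_neg ([quantumSgn α ({1,8,9} : Finset ℕ), quantumSgn α ({1,10,11} : Finset ℕ), quantumSgn α ({2,4,6} : Finset ℕ), quantumSgn α ({2,5,7} : Finset ℕ), quantumSgn α ({3,12,15} : Finset ℕ), quantumSgn α ({3,13,14} : Finset ℕ), quantumSgn α ({4,10,14} : Finset ℕ), quantumSgn α ({5,8,13} : Finset ℕ), quantumSgn α ({6,9,15} : Finset ℕ), quantumSgn α ({7,11,12} : Finset ℕ)] : List ℤ)
      (by intro x hx
          simp only [List.mem_cons, List.not_mem_nil, or_false] at hx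
          rcases hx with rfl|rfl|rfl|rfl|rfl|rfl|rfl|rfl|rfl|rfl <;> exact qsgn_pm α _)
      (by simp only [List.prod_cons, List.prod_nil, mul_one]; exact qS0)
    simp only [List.map_cons, List.map_nil, List.sum_cons, List.sum_nil, add_zero] at hb
    exact hb
  have qA1 : (([1, 8, 9, 1, 10, 11, 2, 4, 6, 2, 5, 7, 3, 12, 15, 3, 13, 14, 4, 8, 12, 5, 10, 15, 6, 11, 13, 7, 9, 14] : List ℕ).map α).prod = ((-1 : ℤ) : ℂ) • (1 : QMat n) := by
    rw [wred_spec α epsd V15 epsd_symm Hc Hsq 30 [1, 8, 9, 1, 10, 11, 2, 4, 6, 2, 5, 7, 3, 12, 15, 3, 13, 14, 4, 8, 12, 5, 10, 15, 6, 11, 13, 7, 9, 14] (by decide) (by decide), wredc1]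
    norm_num
  have qB1 : (([1, 8, 9, 1, 10, 11, 2, 4, 6, 2, 5, 7, 3, 12, 15, 3, 13, 14, 4, 8, 12, 5, 10, 15, 6, 11, 13, 7, 9, 14] : List ℕ).map α).prod = (((quantumSgn α ({1,8,9} : Finset ℕ) * (quantumSgn α ({1,10,11} : Finset ℕ) * (quantumSgn α ({2,4,6} : Finset ℕ) * (quantumSgn α ({2,5,7} : Finset ℕ) * (quantumSgn α ({3,12,15} : Finset ℕ) * (quantumSgn α ({3,13,14} : Finset ℕ) * (quantumSgn α ({4,8,12} : Finset ℕ) * (quantumSgn α ({5,10,15} : Finset ℕ) * (quantumSgn α ({6,11,13} : Finset ℕ) * (quantumSgn α ({7,9,14} : Finset ℕ))))))))))) : ℤ) : ℂ) • (1 : QMat n) := by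
    simp only [List.map_cons, List.map_nil, List.prod_cons, List.prod_nil]
    rw [lineStep (x := 1) (y := 8) (z := 9) α (by norm_num) (by norm_num) (hlines {1,8,9} (by decide))]
    rw [lineStep (x := 1) (y := 10) (z := 11) α (by norm_num) (by norm_num) (hlines {1,10,11} (by decide))]
    rw [lineStep (x := 2) (y := 4) (z := 6) α (by norm_num) (by norm_num) (hlines {2,4,6} (by decide))]
    rw [lineStep (x := 2) (y := 5) (z := 7) α (by norm_num) (by norm_num) (hlines {2,5,7} (by decide))]
    rw [lineStep (x := 3) (y := 12) (z := 15) α (by norm_num) (by norm_num) (hlines {3,12,15} (by decide))]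
    rw [lineStep (x := 3) (y := 13) (z := 14) α (by norm_num) (by norm_num) (hlines {3,13,14} (by decide))]
    rw [lineStep (x := 4) (y := 8) (z := 12) α (by norm_num) (by norm_num) (hlines {4,8,12} (by decide))]
    rw [lineStep (x := 5) (y := 10) (z := 15) α (by norm_num) (by norm_num) (hlines {5,10,15} (by decide))]
    rw [lineStep (x := 6) (y := 11) (z := 13) α (by norm_num) (by norm_num) (hlines {6,11,13} (by decide))]
    rw [lineStep (x := 7) (y := 9) (z := 14) α (by norm_num) (by norm_num) (hlines {7,9,14} (by decide))]
    simp only [smul_smul]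
    congr 1
    push_cast
    ring
  have qS1 : quantumSgn α ({1,8,9} : Finset ℕ) * (quantumSgn α ({1,10,11} : Finset ℕ) * (quantumSgn α ({2,4,6} : Finset ℕ) * (quantumSgn α ({2,5,7} : Finset ℕ) * (quantumSgn α ({3,12,15} : Finset ℕ) * (quantumSgn α ({3,13,14} : Finset ℕ) * (quantumSgn α ({4,8,12} : Finset ℕ) * (quantumSgn α ({5,10,15} : Finset ℕ) * (quantumSgn α ({6,11,13} : Finset ℕ) * (quantumSgn α ({7,9,14} : Finset ℕ)))))))))) = -1 := by
    have hq := smul_one_inj _ _ (qB1.symm.trans qA1)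
    exact_mod_cast hq
  have Wb1 : bitZ (quantumSgn α ({1,8,9} : Finset ℕ)) + (bitZ (quantumSgn α ({1,10,11} : Finset ℕ)) + (bitZ (quantumSgn α ({2,4,6} : Finset ℕ)) + (bitZ (quantumSgn α ({2,5,7} : Finset ℕ)) + (bitZ (quantumSgn α ({3,12,15} : Finset ℕ)) + (bitZ (quantumSgn α ({3,13,14} : Finset ℕ)) + (bitZ (quantumSgn α ({4,8,12} : Finset ℕ)) + (bitZ (quantumSgn α ({5,10,15} : Finset ℕ)) + (bitZ (quantumSgn α ({6,11,13} : Finset ℕ)) + (bitZ (quantumSgn α ({7,9,14} : Finset ℕ))))))))))) = 1 := by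
    have hb := bit_prod_neg ([quantumSgn α ({1,8,9} : Finset ℕ), quantumSgn α ({1,10,11} : Finset ℕ), quantumSgn α ({2,4,6} : Finset ℕ), quantumSgn α ({2,5,7} : Finset ℕ), quantumSgn α ({3,12,15} : Finset ℕ), quantumSgn α ({3,13,14} : Finset ℕ), quantumSgn α ({4,8,12} : Finset ℕ), quantumSgn α ({5,10,15} : Finset ℕ), quantumSgn α ({6,11,13} : Finset ℕ), quantumSgn α ({7,9,14} : Finset ℕ)] : List ℤ)
      (by intro x hx
          simp only [List.mem_cons, List.not_mem_nil, or_false] at hx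
          rcases hx with rfl|rfl|rfl|rfl|rfl|rfl|rfl|rfl|rfl|rfl <;> exact qsgn_pm α _)
      (by simp only [List.prod_cons, List.prod_nil, mul_one]; exact qS1)
    simp only [List.map_cons, List.map_nil, List.sum_cons, List.sum_nil, add_zero] at hb
    exact hb
  have qA2 : (([1, 2, 3, 1, 10, 11, 2, 5, 7, 3, 12, 15, 4, 8, 12, 4, 10, 14, 5, 8, 13, 6, 9, 15, 6, 11, 13, 7, 9, 14] : List ℕ).map α).prod = ((-1 : ℤ) : ℂ) • (1 : QMat n) := by
    rw [wred_spec α epsd V15 epsd_symm Hc Hsq 30 [1, 2, 3, 1, 10, 11, 2, 5, 7, 3, 12, 15, 4, 8, 12, 4, 10, 14, 5, 8, 13, 6, 9, 15, 6, 11, 13, 7, 9, 14] (by decide) (by decide), wredc2]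
    norm_num
  have qB2 : (([1, 2, 3, 1, 10, 11, 2, 5, 7, 3, 12, 15, 4, 8, 12, 4, 10, 14, 5, 8, 13, 6, 9, 15, 6, 11, 13, 7, 9, 14] : List ℕ).map α).prod = (((quantumSgn α ({1,2,3} : Finset ℕ) * (quantumSgn α ({1,10,11} : Finset ℕ) * (quantumSgn α ({2,5,7} : Finset ℕ) * (quantumSgn α ({3,12,15} : Finset ℕ) * (quantumSgn α ({4,8,12} : Finset ℕ) * (quantumSgn α ({4,10,14} : Finset ℕ) * (quantumSgn α ({5,8,13} : Finset ℕ) * (quantumSgn α ({6,9,15} : Finset ℕ) * (quantumSgn α ({6,11,13} : Finset ℕ) * (quantumSgn α ({7,9,14} : Finset ℕ))))))))))) : ℤ) : ℂ) • (1 : QMat n) := by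
    simp only [List.map_cons, List.map_nil, List.prod_cons, List.prod_nil]
    rw [lineStep (x := 1) (y := 2) (z := 3) α (by norm_num) (by norm_num) (hlines {1,2,3} (by decide))]
    rw [lineStep (x := 1) (y := 10) (z := 11) α (by norm_num) (by norm_num) (hlines {1,10,11} (by decide))]
    rw [lineStep (x := 2) (y := 5) (z := 7) α (by norm_num) (by norm_num) (hlines {2,5,7} (by decide))]
    rw [lineStep (x := 3) (y := 12) (z := 15) α (by norm_num) (by norm_num) (hlines {3,12,15} (by decide))]
    rw [lineStep (x := 4) (y := 8) (z := 12) α (by norm_num) (by norm_num) (hlines {4,8,12} (by decide))]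
    rw [lineStep (x := 4) (y := 10) (z := 14) α (by norm_num) (by norm_num) (hlines {4,10,14} (by decide))]
    rw [lineStep (x := 5) (y := 8) (z := 13) α (by norm_num) (by norm_num) (hlines {5,8,13} (by decide))]
    rw [lineStep (x := 6) (y := 9) (z := 15) α (by norm_num) (by norm_num) (hlines {6,9,15} (by decide))]
    rw [lineStep (x := 6) (y := 11) (z := 13) α (by norm_num) (by norm_num) (hlines {6,11,13} (by decide))]
    rw [lineStep (x := 7) (y := 9) (z := 14) α (by norm_num) (by norm_num) (hlines {7,9,14} (by decide))]
    simp only [smul_smul]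
    congr 1
    push_cast
    ring
  have qS2 : quantumSgn α ({1,2,3} : Finset ℕ) * (quantumSgn α ({1,10,11} : Finset ℕ) * (quantumSgn α ({2,5,7} : Finset ℕ) * (quantumSgn α ({3,12,15} : Finset ℕ) * (quantumSgn α ({4,8,12} : Finset ℕ) * (quantumSgn α ({4,10,14} : Finset ℕ) * (quantumSgn α ({5,8,13} : Finset ℕ) * (quantumSgn α ({6,9,15} : Finset ℕ) * (quantumSgn α ({6,11,13} : Finset ℕ) * (quantumSgn α ({7,9,14} : Finset ℕ)))))))))) = -1 := by
    have hq := smul_one_inj _ _ (qB2.symm.trans qA2)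
    exact_mod_cast hq
  have Wb2 : bitZ (quantumSgn α ({1,2,3} : Finset ℕ)) + (bitZ (quantumSgn α ({1,10,11} : Finset ℕ)) + (bitZ (quantumSgn α ({2,5,7} : Finset ℕ)) + (bitZ (quantumSgn α ({3,12,15} : Finset ℕ)) + (bitZ (quantumSgn α ({4,8,12} : Finset ℕ)) + (bitZ (quantumSgn α ({4,10,14} : Finset ℕ)) + (bitZ (quantumSgn α ({5,8,13} : Finset ℕ)) + (bitZ (quantumSgn α ({6,9,15} : Finset ℕ)) + (bitZ (quantumSgn α ({6,11,13} : Finset ℕ)) + (bitZ (quantumSgn α ({7,9,14} : Finset ℕ))))))))))) = 1 := by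
    have hb := bit_prod_neg ([quantumSgn α ({1,2,3} : Finset ℕ), quantumSgn α ({1,10,11} : Finset ℕ), quantumSgn α ({2,5,7} : Finset ℕ), quantumSgn α ({3,12,15} : Finset ℕ), quantumSgn α ({4,8,12} : Finset ℕ), quantumSgn α ({4,10,14} : Finset ℕ), quantumSgn α ({5,8,13} : Finset ℕ), quantumSgn α ({6,9,15} : Finset ℕ), quantumSgn α ({6,11,13} : Finset ℕ), quantumSgn α ({7,9,14} : Finset ℕ)] : List ℤ)
      (by intro x hx
          simp only [List.mem_cons, List.not_mem_nil, or_false] at hx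
          rcases hx with rfl|rfl|rfl|rfl|rfl|rfl|rfl|rfl|rfl|rfl <;> exact qsgn_pm α _)
      (by simp only [List.prod_cons, List.prod_nil, mul_one]; exact qS2)
    simp only [List.map_cons, List.map_nil, List.sum_cons, List.sum_nil, add_zero] at hb
    exact hb
  have qA3 : (([1, 2, 3, 1, 10, 11, 2, 4, 6, 3, 13, 14, 4, 8, 12, 5, 8, 13, 5, 10, 15, 6, 9, 15, 7, 9, 14, 7, 11, 12] : List ℕ).map α).prod = ((-1 : ℤ) : ℂ) • (1 : QMat n) := by
    rw [wred_spec α epsd V15 epsd_symm Hc Hsq 30 [1, 2, 3, 1, 10, 11, 2, 4, 6, 3, 13, 14, 4, 8, 12, 5, 8, 13, 5, 10, 15, 6, 9, 15, 7, 9, 14, 7, 11, 12] (by decide) (by decide), wredc3]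
    norm_num
  have qB3 : (([1, 2, 3, 1, 10, 11, 2, 4, 6, 3, 13, 14, 4, 8, 12, 5, 8, 13, 5, 10, 15, 6, 9, 15, 7, 9, 14, 7, 11, 12] : List ℕ).map α).prod = (((quantumSgn α ({1,2,3} : Finset ℕ) * (quantumSgn α ({1,10,11} : Finset ℕ) * (quantumSgn α ({2,4,6} : Finset ℕ) * (quantumSgn α ({3,13,14} : Finset ℕ) * (quantumSgn α ({4,8,12} : Finset ℕ) * (quantumSgn α ({5,8,13} : Finset ℕ) * (quantumSgn α ({5,10,15} : Finset ℕ) * (quantumSgn α ({6,9,15} : Finset ℕ) * (quantumSgn α ({7,9,14} : Finset ℕ) * (quantumSgn α ({7,11,12} : Finset ℕ))))))))))) : ℤ) : ℂ) • (1 : QMat n) := by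
    simp only [List.map_cons, List.map_nil, List.prod_cons, List.prod_nil]
    rw [lineStep (x := 1) (y := 2) (z := 3) α (by norm_num) (by norm_num) (hlines {1,2,3} (by decide))]
    rw [lineStep (x := 1) (y := 10) (z := 11) α (by norm_num) (by norm_num) (hlines {1,10,11} (by decide))]
    rw [lineStep (x := 2) (y := 4) (z := 6) α (by norm_num) (by norm_num) (hlines {2,4,6} (by decide))]
    rw [lineStep (x := 3) (y := 13) (z := 14) α (by norm_num) (by norm_num) (hlines {3,13,14} (by decide))]
    rw [lineStep (x := 4) (y := 8) (z := 12) α (by norm_num) (by norm_num) (hlines {4,8,12} (by decide))]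
    rw [lineStep (x := 5) (y := 8) (z := 13) α (by norm_num) (by norm_num) (hlines {5,8,13} (by decide))]
    rw [lineStep (x := 5) (y := 10) (z := 15) α (by norm_num) (by norm_num) (hlines {5,10,15} (by decide))]
    rw [lineStep (x := 6) (y := 9) (z := 15) α (by norm_num) (by norm_num) (hlines {6,9,15} (by decide))]
    rw [lineStep (x := 7) (y := 9) (z := 14) α (by norm_num) (by norm_num) (hlines {7,9,14} (by decide))]
    rw [lineStep (x := 7) (y := 11) (z := 12) α (by norm_num) (by norm_num) (hlines {7,11,12} (by decide))]
    simp only [smul_smul]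
    congr 1
    push_cast
    ring
  have qS3 : quantumSgn α ({1,2,3} : Finset ℕ) * (quantumSgn α ({1,10,11} : Finset ℕ) * (quantumSgn α ({2,4,6} : Finset ℕ) * (quantumSgn α ({3,13,14} : Finset ℕ) * (quantumSgn α ({4,8,12} : Finset ℕ) * (quantumSgn α ({5,8,13} : Finset ℕ) * (quantumSgn α ({5,10,15} : Finset ℕ) * (quantumSgn α ({6,9,15} : Finset ℕ) * (quantumSgn α ({7,9,14} : Finset ℕ) * (quantumSgn α ({7,11,12} : Finset ℕ)))))))))) = -1 := by
    have hq := smul_one_inj _ _ (qB3.symm.trans qA3)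
    exact_mod_cast hq
  have Wb3 : bitZ (quantumSgn α ({1,2,3} : Finset ℕ)) + (bitZ (quantumSgn α ({1,10,11} : Finset ℕ)) + (bitZ (quantumSgn α ({2,4,6} : Finset ℕ)) + (bitZ (quantumSgn α ({3,13,14} : Finset ℕ)) + (bitZ (quantumSgn α ({4,8,12} : Finset ℕ)) + (bitZ (quantumSgn α ({5,8,13} : Finset ℕ)) + (bitZ (quantumSgn α ({5,10,15} : Finset ℕ)) + (bitZ (quantumSgn α ({6,9,15} : Finset ℕ)) + (bitZ (quantumSgn α ({7,9,14} : Finset ℕ)) + (bitZ (quantumSgn α ({7,11,12} : Finset ℕ))))))))))) = 1 := by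
    have hb := bit_prod_neg ([quantumSgn α ({1,2,3} : Finset ℕ), quantumSgn α ({1,10,11} : Finset ℕ), quantumSgn α ({2,4,6} : Finset ℕ), quantumSgn α ({3,13,14} : Finset ℕ), quantumSgn α ({4,8,12} : Finset ℕ), quantumSgn α ({5,8,13} : Finset ℕ), quantumSgn α ({5,10,15} : Finset ℕ), quantumSgn α ({6,9,15} : Finset ℕ), quantumSgn α ({7,9,14} : Finset ℕ), quantumSgn α ({7,11,12} : Finset ℕ)] : List ℤ)
      (by intro x hx
          simp only [List.mem_cons, List.not_mem_nil, or_false] at hx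
          rcases hx with rfl|rfl|rfl|rfl|rfl|rfl|rfl|rfl|rfl|rfl <;> exact qsgn_pm α _)
      (by simp only [List.prod_cons, List.prod_nil, mul_one]; exact qS3)
    simp only [List.map_cons, List.map_nil, List.sum_cons, List.sum_nil, add_zero] at hb
    exact hb
  have qA4 : (([1, 2, 3, 1, 8, 9, 2, 5, 7, 3, 13, 14, 4, 8, 12, 4, 10, 14, 5, 10, 15, 6, 9, 15, 6, 11, 13, 7, 11, 12] : List ℕ).map α).prod = ((-1 : ℤ) : ℂ) • (1 : QMat n) := by
    rw [wred_spec α epsd V15 epsd_symm Hc Hsq 30 [1, 2, 3, 1, 8, 9, 2, 5, 7, 3, 13, 14, 4, 8, 12, 4, 10, 14, 5, 10, 15, 6, 9, 15, 6, 11, 13, 7, 11, 12] (by decide) (by decide), wredc4]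
    norm_num
  have qB4 : (([1, 2, 3, 1, 8, 9, 2, 5, 7, 3, 13, 14, 4, 8, 12, 4, 10, 14, 5, 10, 15, 6, 9, 15, 6, 11, 13, 7, 11, 12] : List ℕ).map α).prod = (((quantumSgn α ({1,2,3} : Finset ℕ) * (quantumSgn α ({1,8,9} : Finset ℕ) * (quantumSgn α ({2,5,7} : Finset ℕ) * (quantumSgn α ({3,13,14} : Finset ℕ) * (quantumSgn α ({4,8,12} : Finset ℕ) * (quantumSgn α ({4,10,14} : Finset ℕ) * (quantumSgn α ({5,10,15} : Finset ℕ) * (quantumSgn α ({6,9,15} : Finset ℕ) * (quantumSgn α ({6,11,13} : Finset ℕ) * (quantumSgn α ({7,11,12} : Finset ℕ))))))))))) : ℤ) : ℂ) • (1 : QMat n) := by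
    simp only [List.map_cons, List.map_nil, List.prod_cons, List.prod_nil]
    rw [lineStep (x := 1) (y := 2) (z := 3) α (by norm_num) (by norm_num) (hlines {1,2,3} (by decide))]
    rw [lineStep (x := 1) (y := 8) (z := 9) α (by norm_num) (by norm_num) (hlines {1,8,9} (by decide))]
    rw [lineStep (x := 2) (y := 5) (z := 7) α (by norm_num) (by norm_num) (hlines {2,5,7} (by decide))]
    rw [lineStep (x := 3) (y := 13) (z := 14) α (by norm_num) (by norm_num) (hlines {3,13,14} (by decide))]
    rw [lineStep (x := 4) (y := 8) (z := 12) α (by norm_num) (by norm_num) (hlines {4,8,12} (by decide))]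
    rw [lineStep (x := 4) (y := 10) (z := 14) α (by norm_num) (by norm_num) (hlines {4,10,14} (by decide))]
    rw [lineStep (x := 5) (y := 10) (z := 15) α (by norm_num) (by norm_num) (hlines {5,10,15} (by decide))]
    rw [lineStep (x := 6) (y := 9) (z := 15) α (by norm_num) (by norm_num) (hlines {6,9,15} (by decide))]
    rw [lineStep (x := 6) (y := 11) (z := 13) α (by norm_num) (by norm_num) (hlines {6,11,13} (by decide))]
    rw [lineStep (x := 7) (y := 11) (z := 12) α (by norm_num) (by norm_num) (hlines {7,11,12} (by decide))]
    simp only [smul_smul]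
    congr 1
    push_cast
    ring
  have qS4 : quantumSgn α ({1,2,3} : Finset ℕ) * (quantumSgn α ({1,8,9} : Finset ℕ) * (quantumSgn α ({2,5,7} : Finset ℕ) * (quantumSgn α ({3,13,14} : Finset ℕ) * (quantumSgn α ({4,8,12} : Finset ℕ) * (quantumSgn α ({4,10,14} : Finset ℕ) * (quantumSgn α ({5,10,15} : Finset ℕ) * (quantumSgn α ({6,9,15} : Finset ℕ) * (quantumSgn α ({6,11,13} : Finset ℕ) * (quantumSgn α ({7,11,12} : Finset ℕ)))))))))) = -1 := by
    have hq := smul_one_inj _ _ (qB4.symm.trans qA4)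
    exact_mod_cast hq
  have Wb4 : bitZ (quantumSgn α ({1,2,3} : Finset ℕ)) + (bitZ (quantumSgn α ({1,8,9} : Finset ℕ)) + (bitZ (quantumSgn α ({2,5,7} : Finset ℕ)) + (bitZ (quantumSgn α ({3,13,14} : Finset ℕ)) + (bitZ (quantumSgn α ({4,8,12} : Finset ℕ)) + (bitZ (quantumSgn α ({4,10,14} : Finset ℕ)) + (bitZ (quantumSgn α ({5,10,15} : Finset ℕ)) + (bitZ (quantumSgn α ({6,9,15} : Finset ℕ)) + (bitZ (quantumSgn α ({6,11,13} : Finset ℕ)) + (bitZ (quantumSgn α ({7,11,12} : Finset ℕ))))))))))) = 1 := by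
    have hb := bit_prod_neg ([quantumSgn α ({1,2,3} : Finset ℕ), quantumSgn α ({1,8,9} : Finset ℕ), quantumSgn α ({2,5,7} : Finset ℕ), quantumSgn α ({3,13,14} : Finset ℕ), quantumSgn α ({4,8,12} : Finset ℕ), quantumSgn α ({4,10,14} : Finset ℕ), quantumSgn α ({5,10,15} : Finset ℕ), quantumSgn α ({6,9,15} : Finset ℕ), quantumSgn α ({6,11,13} : Finset ℕ), quantumSgn α ({7,11,12} : Finset ℕ)] : List ℤ)
      (by intro x hx
          simp only [List.mem_cons, List.not_mem_nil, or_false] at hx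
          rcases hx with rfl|rfl|rfl|rfl|rfl|rfl|rfl|rfl|rfl|rfl <;> exact qsgn_pm α _)
      (by simp only [List.prod_cons, List.prod_nil, mul_one]; exact qS4)
    simp only [List.map_cons, List.map_nil, List.sum_cons, List.sum_nil, add_zero] at hb
    exact hb
  have qA5 : (([1, 2, 3, 1, 8, 9, 2, 4, 6, 3, 12, 15, 4, 10, 14, 5, 8, 13, 5, 10, 15, 6, 11, 13, 7, 9, 14, 7, 11, 12] : List ℕ).map α).prod = ((-1 : ℤ) : ℂ) • (1 : QMat n) := by
    rw [wred_spec α epsd V15 epsd_symm Hc Hsq 30 [1, 2, 3, 1, 8, 9, 2, 4, 6, 3, 12, 15, 4, 10, 14, 5, 8, 13, 5, 10, 15, 6, 11, 13, 7, 9, 14, 7, 11, 12] (by decide) (by decide), wredc5]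
    norm_num
  have qB5 : (([1, 2, 3, 1, 8, 9, 2, 4, 6, 3, 12, 15, 4, 10, 14, 5, 8, 13, 5, 10, 15, 6, 11, 13, 7, 9, 14, 7, 11, 12] : List ℕ).map α).prod = (((quantumSgn α ({1,2,3} : Finset ℕ) * (quantumSgn α ({1,8,9} : Finset ℕ) * (quantumSgn α ({2,4,6} : Finset ℕ) * (quantumSgn α ({3,12,15} : Finset ℕ) * (quantumSgn α ({4,10,14} : Finset ℕ) * (quantumSgn α ({5,8,13} : Finset ℕ) * (quantumSgn α ({5,10,15} : Finset ℕ) * (quantumSgn α ({6,11,13} : Finset ℕ) * (quantumSgn α ({7,9,14} : Finset ℕ) * (quantumSgn α ({7,11,12} : Finset ℕ))))))))))) : ℤ) : ℂ) • (1 : QMat n) := by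
    simp only [List.map_cons, List.map_nil, List.prod_cons, List.prod_nil]
    rw [lineStep (x := 1) (y := 2) (z := 3) α (by norm_num) (by norm_num) (hlines {1,2,3} (by decide))]
    rw [lineStep (x := 1) (y := 8) (z := 9) α (by norm_num) (by norm_num) (hlines {1,8,9} (by decide))]
    rw [lineStep (x := 2) (y := 4) (z := 6) α (by norm_num) (by norm_num) (hlines {2,4,6} (by decide))]
    rw [lineStep (x := 3) (y := 12) (z := 15) α (by norm_num) (by norm_num) (hlines {3,12,15} (by decide))]
    rw [lineStep (x := 4) (y := 10) (z := 14) α (by norm_num) (by norm_num) (hlines {4,10,14} (by decide))]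
    rw [lineStep (x := 5) (y := 8) (z := 13) α (by norm_num) (by norm_num) (hlines {5,8,13} (by decide))]
    rw [lineStep (x := 5) (y := 10) (z := 15) α (by norm_num) (by norm_num) (hlines {5,10,15} (by decide))]
    rw [lineStep (x := 6) (y := 11) (z := 13) α (by norm_num) (by norm_num) (hlines {6,11,13} (by decide))]
    rw [lineStep (x := 7) (y := 9) (z := 14) α (by norm_num) (by norm_num) (hlines {7,9,14} (by decide))]
    rw [lineStep (x := 7) (y := 11) (z := 12) α (by norm_num) (by norm_num) (hlines {7,11,12} (by decide))]
    simp only [smul_smul]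
    congr 1
    push_cast
    ring
  have qS5 : quantumSgn α ({1,2,3} : Finset ℕ) * (quantumSgn α ({1,8,9} : Finset ℕ) * (quantumSgn α ({2,4,6} : Finset ℕ) * (quantumSgn α ({3,12,15} : Finset ℕ) * (quantumSgn α ({4,10,14} : Finset ℕ) * (quantumSgn α ({5,8,13} : Finset ℕ) * (quantumSgn α ({5,10,15} : Finset ℕ) * (quantumSgn α ({6,11,13} : Finset ℕ) * (quantumSgn α ({7,9,14} : Finset ℕ) * (quantumSgn α ({7,11,12} : Finset ℕ)))))))))) = -1 := by
    have hq := smul_one_inj _ _ (qB5.symm.trans qA5)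
    exact_mod_cast hq
  have Wb5 : bitZ (quantumSgn α ({1,2,3} : Finset ℕ)) + (bitZ (quantumSgn α ({1,8,9} : Finset ℕ)) + (bitZ (quantumSgn α ({2,4,6} : Finset ℕ)) + (bitZ (quantumSgn α ({3,12,15} : Finset ℕ)) + (bitZ (quantumSgn α ({4,10,14} : Finset ℕ)) + (bitZ (quantumSgn α ({5,8,13} : Finset ℕ)) + (bitZ (quantumSgn α ({5,10,15} : Finset ℕ)) + (bitZ (quantumSgn α ({6,11,13} : Finset ℕ)) + (bitZ (quantumSgn α ({7,9,14} : Finset ℕ)) + (bitZ (quantumSgn α ({7,11,12} : Finset ℕ))))))))))) = 1 := by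
    have hb := bit_prod_neg ([quantumSgn α ({1,2,3} : Finset ℕ), quantumSgn α ({1,8,9} : Finset ℕ), quantumSgn α ({2,4,6} : Finset ℕ), quantumSgn α ({3,12,15} : Finset ℕ), quantumSgn α ({4,10,14} : Finset ℕ), quantumSgn α ({5,8,13} : Finset ℕ), quantumSgn α ({5,10,15} : Finset ℕ), quantumSgn α ({6,11,13} : Finset ℕ), quantumSgn α ({7,9,14} : Finset ℕ), quantumSgn α ({7,11,12} : Finset ℕ)] : List ℤ)
      (by intro x hx
          simp only [List.mem_cons, List.not_mem_nil, or_false] at hx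
          rcases hx with rfl|rfl|rfl|rfl|rfl|rfl|rfl|rfl|rfl|rfl <;> exact qsgn_pm α _)
      (by simp only [List.prod_cons, List.prod_nil, mul_one]; exact qS5)
    simp only [List.map_cons, List.map_nil, List.sum_cons, List.sum_nil, add_zero] at hb
    exact hb
  have lower : ∀ a : ℕ → ℤ, (∀ v, a v = 1 ∨ a v = -1) →
      3 ≤ (doilyLines.filter (fun h0 => quantumSgn α h0 ≠ classicalSgn a h0)).card := by
    intro a hapm
    have capm : ∀ h0, classicalSgn a h0 = 1 ∨ classicalSgn a h0 = -1 := csgn_pm a hapm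
    have Mrw : doilyLines.filter (fun h0 => quantumSgn α h0 ≠ classicalSgn a h0)
        = doilyLines.filter (fun h0 => bitZ (quantumSgn α h0) + bitZ (classicalSgn a h0) = 1) :=
      Finset.filter_congr (fun h0 _ => pm_ne_iff (qsgn_pm α h0) (capm h0))
    have K0 : (((T0.filter (fun h0 => bitZ (quantumSgn α h0) + bitZ (classicalSgn a h0) = 1)).card : ℕ) : ZMod 2) = 1 := by
      apply sum_parity
      simp only [T0]
      rw [Finset.sum_insert (by decide), Finset.sum_insert (by decide), Finset.sum_insert (by decide), Finset.sum_insert (by decide), Finset.sum_insert (by decide), Finset.sum_insert (by decide), Finset.sum_insert (by decide), Finset.sum_insert (by decide), Finset.sum_insert (by decide), Finset.sum_singleton]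
      linear_combination Wb0 + bit_csgn3 a hapm (show (1:ℕ) < 8 by norm_num) (show (8:ℕ) < 9 by norm_num) + bit_csgn3 a hapm (show (1:ℕ) < 10 by norm_num) (show (10:ℕ) < 11 by norm_num) + bit_csgn3 a hapm (show (2:ℕ) < 4 by norm_num) (show (4:ℕ) < 6 by norm_num) + bit_csgn3 a hapm (show (2:ℕ) < 5 by norm_num) (show (5:ℕ) < 7 by norm_num) + bit_csgn3 a hapm (show (3:ℕ) < 12 by norm_num) (show (12:ℕ) < 15 by norm_num) + bit_csgn3 a hapm (show (3:ℕ) < 13 by norm_num) (show (13:ℕ) < 14 by norm_num) + bit_csgn3 a hapm (show (4:ℕ) < 10 by norm_num) (show (10:ℕ) < 14 by norm_num) + bit_csgn3 a hapm (show (5:ℕ) < 8 by norm_num) (show (8:ℕ) < 13 by norm_num) + bit_csgn3 a hapm (show (6:ℕ) < 9 by norm_num) (show (9:ℕ) < 15 by norm_num) + bit_csgn3 a hapm (show (7:ℕ) < 11 by norm_num) (show (11:ℕ) < 12 by norm_num) + (bitZ (a 1) + bitZ (a 2) + bitZ (a 3) + bitZ (a 4) + bitZ (a 5) + bitZ (a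 6) + bitZ (a 7) + bitZ (a 8) + bitZ (a 9) + bitZ (a 10) + bitZ (a 11) + bitZ (a 12) + bitZ (a 13) + bitZ (a 14) + bitZ (a 15)) * two_zmod
    have K1 : (((T1.filter (fun h0 => bitZ (quantumSgn α h0) + bitZ (classicalSgn a h0) = 1)).card : ℕ) : ZMod 2) = 1 := by
      apply sum_parity
      simp only [T1]
      rw [Finset.sum_insert (by decide), Finset.sum_insert (by decide), Finset.sum_insert (by decide), Finset.sum_insert (by decide), Finset.sum_insert (by decide), Finset.sum_insert (by decide), Finset.sum_insert (by decide), Finset.sum_insert (by decide), Finset.sum_insert (by decide), Finset.sum_singleton]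
      linear_combination Wb1 + bit_csgn3 a hapm (show (1:ℕ) < 8 by norm_num) (show (8:ℕ) < 9 by norm_num) + bit_csgn3 a hapm (show (1:ℕ) < 10 by norm_num) (show (10:ℕ) < 11 by norm_num) + bit_csgn3 a hapm (show (2:ℕ) < 4 by norm_num) (show (4:ℕ) < 6 by norm_num) + bit_csgn3 a hapm (show (2:ℕ) < 5 by norm_num) (show (5:ℕ) < 7 by norm_num) + bit_csgn3 a hapm (show (3:ℕ) < 12 by norm_num) (show (12:ℕ) < 15 by norm_num) + bit_csgn3 a hapm (show (3:ℕ) < 13 by norm_num) (show (13:ℕ) < 14 by norm_num) + bit_csgn3 a hapm (show (4:ℕ) < 8 by norm_num) (show (8:ℕ) < 12 by norm_num) + bit_csgn3 a hapm (show (5:ℕ) < 10 by norm_num) (show (10:ℕ) < 15 by norm_num) + bit_csgn3 a hapm (show (6:ℕ) < 11 by norm_num) (show (11:ℕ) < 13 by norm_num) + bit_csgn3 a hapm (show (7:ℕ) < 9 by norm_num) (show (9:ℕ) < 14 by norm_num) + (bitZ (a 1) + bitZ (a 2) + bitZ (a 3) + bitZ (a 4) + bitZ (a 5) + bitZ (a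 6) + bitZ (a 7) + bitZ (a 8) + bitZ (a 9) + bitZ (a 10) + bitZ (a 11) + bitZ (a 12) + bitZ (a 13) + bitZ (a 14) + bitZ (a 15)) * two_zmod
    have K2 : (((T2.filter (fun h0 => bitZ (quantumSgn α h0) + bitZ (classicalSgn a h0) = 1)).card : ℕ) : ZMod 2) = 1 := by
      apply sum_parity
      simp only [T2]
      rw [Finset.sum_insert (by decide), Finset.sum_insert (by decide), Finset.sum_insert (by decide), Finset.sum_insert (by decide), Finset.sum_insert (by decide), Finset.sum_insert (by decide), Finset.sum_insert (by decide), Finset.sum_insert (by decide), Finset.sum_insert (by decide), Finset.sum_singleton]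
      linear_combination Wb2 + bit_csgn3 a hapm (show (1:ℕ) < 2 by norm_num) (show (2:ℕ) < 3 by norm_num) + bit_csgn3 a hapm (show (1:ℕ) < 10 by norm_num) (show (10:ℕ) < 11 by norm_num) + bit_csgn3 a hapm (show (2:ℕ) < 5 by norm_num) (show (5:ℕ) < 7 by norm_num) + bit_csgn3 a hapm (show (3:ℕ) < 12 by norm_num) (show (12:ℕ) < 15 by norm_num) + bit_csgn3 a hapm (show (4:ℕ) < 8 by norm_num) (show (8:ℕ) < 12 by norm_num) + bit_csgn3 a hapm (show (4:ℕ) < 10 by norm_num) (show (10:ℕ) < 14 by norm_num) + bit_csgn3 a hapm (show (5:ℕ) < 8 by norm_num) (show (8:ℕ) < 13 by norm_num) + bit_csgn3 a hapm (show (6:ℕ) < 9 by norm_num) (show (9:ℕ) < 15 by norm_num) + bit_csgn3 a hapm (show (6:ℕ) < 11 by norm_num) (show (11:ℕ) < 13 by norm_num) + bit_csgn3 a hapm (show (7:ℕ) < 9 by norm_num) (show (9:ℕ) < 14 by norm_num) + (bitZ (a 1) + bitZ (a 2) + bitZ (a 3) + bitZ (a 4) + bitZ (a 5) + bitZ (a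 6) + bitZ (a 7) + bitZ (a 8) + bitZ (a 9) + bitZ (a 10) + bitZ (a 11) + bitZ (a 12) + bitZ (a 13) + bitZ (a 14) + bitZ (a 15)) * two_zmod
    have K3 : (((T3.filter (fun h0 => bitZ (quantumSgn α h0) + bitZ (classicalSgn a h0) = 1)).card : ℕ) : ZMod 2) = 1 := by
      apply sum_parity
      simp only [T3]
      rw [Finset.sum_insert (by decide), Finset.sum_insert (by decide), Finset.sum_insert (by decide), Finset.sum_insert (by decide), Finset.sum_insert (by decide), Finset.sum_insert (by decide), Finset.sum_insert (by decide), Finset.sum_insert (by decide), Finset.sum_insert (by decide), Finset.sum_singleton]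
      linear_combination Wb3 + bit_csgn3 a hapm (show (1:ℕ) < 2 by norm_num) (show (2:ℕ) < 3 by norm_num) + bit_csgn3 a hapm (show (1:ℕ) < 10 by norm_num) (show (10:ℕ) < 11 by norm_num) + bit_csgn3 a hapm (show (2:ℕ) < 4 by norm_num) (show (4:ℕ) < 6 by norm_num) + bit_csgn3 a hapm (show (3:ℕ) < 13 by norm_num) (show (13:ℕ) < 14 by norm_num) + bit_csgn3 a hapm (show (4:ℕ) < 8 by norm_num) (show (8:ℕ) < 12 by norm_num) + bit_csgn3 a hapm (show (5:ℕ) < 8 by norm_num) (show (8:ℕ) < 13 by norm_num) + bit_csgn3 a hapm (show (5:ℕ) < 10 by norm_num) (show (10:ℕ) < 15 by norm_num) + bit_csgn3 a hapm (show (6:ℕ) < 9 by norm_num) (show (9:ℕ) < 15 by norm_num) + bit_csgn3 a hapm (show (7:ℕ) < 9 by norm_num) (show (9:ℕ) < 14 by norm_num) + bit_csgn3 a hapm (show (7:ℕ) < 11 by norm_num) (show (11:ℕ) < 12 by norm_num) + (bitZ (a 1) + bitZ (a 2) + bitZ (a 3) + bitZ (a 4) + bitZ (a 5) + bitZ (a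 6) + bitZ (a 7) + bitZ (a 8) + bitZ (a 9) + bitZ (a 10) + bitZ (a 11) + bitZ (a 12) + bitZ (a 13) + bitZ (a 14) + bitZ (a 15)) * two_zmod
    have K4 : (((T4.filter (fun h0 => bitZ (quantumSgn α h0) + bitZ (classicalSgn a h0) = 1)).card : ℕ) : ZMod 2) = 1 := by
      apply sum_parity
      simp only [T4]
      rw [Finset.sum_insert (by decide), Finset.sum_insert (by decide), Finset.sum_insert (by decide), Finset.sum_insert (by decide), Finset.sum_insert (by decide), Finset.sum_insert (by decide), Finset.sum_insert (by decide), Finset.sum_insert (by decide), Finset.sum_insert (by decide), Finset.sum_singleton]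
      linear_combination Wb4 + bit_csgn3 a hapm (show (1:ℕ) < 2 by norm_num) (show (2:ℕ) < 3 by norm_num) + bit_csgn3 a hapm (show (1:ℕ) < 8 by norm_num) (show (8:ℕ) < 9 by norm_num) + bit_csgn3 a hapm (show (2:ℕ) < 5 by norm_num) (show (5:ℕ) < 7 by norm_num) + bit_csgn3 a hapm (show (3:ℕ) < 13 by norm_num) (show (13:ℕ) < 14 by norm_num) + bit_csgn3 a hapm (show (4:ℕ) < 8 by norm_num) (show (8:ℕ) < 12 by norm_num) + bit_csgn3 a hapm (show (4:ℕ) < 10 by norm_num) (show (10:ℕ) < 14 by norm_num) + bit_csgn3 a hapm (show (5:ℕ) < 10 by norm_num) (show (10:ℕ) < 15 by norm_num) + bit_csgn3 a hapm (show (6:ℕ) < 9 by norm_num) (show (9:ℕ) < 15 by norm_num) + bit_csgn3 a hapm (show (6:ℕ) < 11 by norm_num) (show (11:ℕ) < 13 by norm_num) + bit_csgn3 a hapm (show (7:ℕ) < 11 by norm_num) (show (11:ℕ) < 12 by norm_num) + (bitZ (a 1) + bitZ (a 2) + bitZ (a 3) + bitZ (a 4) + bitZ (a 5) + bitZ (a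 6) + bitZ (a 7) + bitZ (a 8) + bitZ (a 9) + bitZ (a 10) + bitZ (a 11) + bitZ (a 12) + bitZ (a 13) + bitZ (a 14) + bitZ (a 15)) * two_zmod
    have K5 : (((T5.filter (fun h0 => bitZ (quantumSgn α h0) + bitZ (classicalSgn a h0) = 1)).card : ℕ) : ZMod 2) = 1 := by
      apply sum_parity
      simp only [T5]
      rw [Finset.sum_insert (by decide), Finset.sum_insert (by decide), Finset.sum_insert (by decide), Finset.sum_insert (by decide), Finset.sum_insert (by decide), Finset.sum_insert (by decide), Finset.sum_insert (by decide), Finset.sum_insert (by decide), Finset.sum_insert (by decide), Finset.sum_singleton]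
      linear_combination Wb5 + bit_csgn3 a hapm (show (1:ℕ) < 2 by norm_num) (show (2:ℕ) < 3 by norm_num) + bit_csgn3 a hapm (show (1:ℕ) < 8 by norm_num) (show (8:ℕ) < 9 by norm_num) + bit_csgn3 a hapm (show (2:ℕ) < 4 by norm_num) (show (4:ℕ) < 6 by norm_num) + bit_csgn3 a hapm (show (3:ℕ) < 12 by norm_num) (show (12:ℕ) < 15 by norm_num) + bit_csgn3 a hapm (show (4:ℕ) < 10 by norm_num) (show (10:ℕ) < 14 by norm_num) + bit_csgn3 a hapm (show (5:ℕ) < 8 by norm_num) (show (8:ℕ) < 13 by norm_num) + bit_csgn3 a hapm (show (5:ℕ) < 10 by norm_num) (show (10:ℕ) < 15 by norm_num) + bit_csgn3 a hapm (show (6:ℕ) < 11 by norm_num) (show (11:ℕ) < 13 by norm_num) + bit_csgn3 a hapm (show (7:ℕ) < 9 by norm_num) (show (9:ℕ) < 14 by norm_num) + bit_csgn3 a hapm (show (7:ℕ) < 11 by norm_num) (show (11:ℕ) < 12 by norm_num) + (bitZ (a 1) + bitZ (a 2) + bitZ (a 3) + bitZ (a 4) + bitZ (a 5) + bitZ (a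 6) + bitZ (a 7) + bitZ (a 8) + bitZ (a 9) + bitZ (a 10) + bitZ (a 11) + bitZ (a 12) + bitZ (a 13) + bitZ (a 14) + bitZ (a 15)) * two_zmod
    rw [Mrw]
    by_contra hlt
    push_neg at hlt
    interval_cases hc : (doilyLines.filter (fun h0 => bitZ (quantumSgn α h0) + bitZ (classicalSgn a h0) = 1)).card
    · -- card = 0
      have hempty := Finset.card_eq_zero.mp hc
      have hT : T0.filter (fun h0 => bitZ (quantumSgn α h0) + bitZ (classicalSgn a h0) = 1) = ∅ := by
        rw [Finset.filter_eq_empty_iff]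
        intro x hx hPx
        have hxM : x ∈ doilyLines.filter (fun h0 => bitZ (quantumSgn α h0) + bitZ (classicalSgn a h0) = 1) :=
          Finset.mem_filter.mpr ⟨Tsub.1 x hx, hPx⟩
        rw [hempty] at hxM
        exact absurd hxM (Finset.notMem_empty x)
      rw [hT] at K0
      simp at K0
    · -- card = 1
      obtain ⟨h0, hM⟩ := Finset.card_eq_one.mp hc
      have h0M : h0 ∈ doilyLines.filter (fun h1 => bitZ (quantumSgn α h1) + bitZ (classicalSgn a h1) = 1) := by
        rw [hM]; exact Finset.mem_singleton_self h0
      obtain ⟨h0lines, h0P⟩ := Finset.mem_filter.mp h0M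
      rcases dec1 h0 h0lines with hs|hs|hs|hs|hs|hs
      · have hT : T0.filter (fun h1 => bitZ (quantumSgn α h1) + bitZ (classicalSgn a h1) = 1) = ∅ := by
          rw [Finset.filter_eq_empty_iff]
          intro x hx hPx
          have hxM : x ∈ doilyLines.filter (fun h1 => bitZ (quantumSgn α h1) + bitZ (classicalSgn a h1) = 1) :=
            Finset.mem_filter.mpr ⟨Tsub.1 x hx, hPx⟩
          rw [hM, Finset.mem_singleton] at hxM
          subst hxM
          exact hs hx
        rw [hT] at K0
        simp at K0
      · have hT : T1.filter (fun h1 => bitZ (quantumSgn α h1) + bitZ (classicalSgn a h1) = 1) = ∅ := by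
          rw [Finset.filter_eq_empty_iff]
          intro x hx hPx
          have hxM : x ∈ doilyLines.filter (fun h1 => bitZ (quantumSgn α h1) + bitZ (classicalSgn a h1) = 1) :=
            Finset.mem_filter.mpr ⟨Tsub.2.1 x hx, hPx⟩
          rw [hM, Finset.mem_singleton] at hxM
          subst hxM
          exact hs hx
        rw [hT] at K1
        simp at K1
      · have hT : T2.filter (fun h1 => bitZ (quantumSgn α h1) + bitZ (classicalSgn a h1) = 1) = ∅ := by
          rw [Finset.filter_eq_empty_iff]
          intro x hx hPx
          have hxM : x ∈ doilyLines.filter (fun h1 => bitZ (quantumSgn α h1) + bitZ (classicalSgn a h1) = 1) :=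
            Finset.mem_filter.mpr ⟨Tsub.2.2.1 x hx, hPx⟩
          rw [hM, Finset.mem_singleton] at hxM
          subst hxM
          exact hs hx
        rw [hT] at K2
        simp at K2
      · have hT : T3.filter (fun h1 => bitZ (quantumSgn α h1) + bitZ (classicalSgn a h1) = 1) = ∅ := by
          rw [Finset.filter_eq_empty_iff]
          intro x hx hPx
          have hxM : x ∈ doilyLines.filter (fun h1 => bitZ (quantumSgn α h1) + bitZ (classicalSgn a h1) = 1) :=
            Finset.mem_filter.mpr ⟨Tsub.2.2.2.1 x hx, hPx⟩
          rw [hM, Finset.mem_singleton] at hxM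
          subst hxM
          exact hs hx
        rw [hT] at K3
        simp at K3
      · have hT : T4.filter (fun h1 => bitZ (quantumSgn α h1) + bitZ (classicalSgn a h1) = 1) = ∅ := by
          rw [Finset.filter_eq_empty_iff]
          intro x hx hPx
          have hxM : x ∈ doilyLines.filter (fun h1 => bitZ (quantumSgn α h1) + bitZ (classicalSgn a h1) = 1) :=
            Finset.mem_filter.mpr ⟨Tsub.2.2.2.2.1 x hx, hPx⟩
          rw [hM, Finset.mem_singleton] at hxM
          subst hxM
          exact hs hx
        rw [hT] at K4
        simp at K4
      · have hT : T5.filter (fun h1 => bitZ (quantumSgn α h1) + bitZ (classicalSgn a h1) = 1) = ∅ := by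
          rw [Finset.filter_eq_empty_iff]
          intro x hx hPx
          have hxM : x ∈ doilyLines.filter (fun h1 => bitZ (quantumSgn α h1) + bitZ (classicalSgn a h1) = 1) :=
            Finset.mem_filter.mpr ⟨Tsub.2.2.2.2.2 x hx, hPx⟩
          rw [hM, Finset.mem_singleton] at hxM
          subst hxM
          exact hs hx
        rw [hT] at K5
        simp at K5
    · -- card = 2
      obtain ⟨h1, h2, hne12, hM⟩ := Finset.card_eq_two.mp hc
      have h1M : h1 ∈ doilyLines.filter (fun h3 => bitZ (quantumSgn α h3) + bitZ (classicalSgn a h3) = 1) := by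
        rw [hM]; exact Finset.mem_insert_self h1 {h2}
      have h2M : h2 ∈ doilyLines.filter (fun h3 => bitZ (quantumSgn α h3) + bitZ (classicalSgn a h3) = 1) := by
        rw [hM]; exact Finset.mem_insert_of_mem (Finset.mem_singleton_self h2)
      obtain ⟨h1lines, h1P⟩ := Finset.mem_filter.mp h1M
      obtain ⟨h2lines, h2P⟩ := Finset.mem_filter.mp h2M
      rcases dec2 h1 h1lines h2 h2lines with ⟨m1,m2⟩|⟨m1,m2⟩|⟨m1,m2⟩|⟨m1,m2⟩|⟨m1,m2⟩|⟨m1,m2⟩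
      · have hT : T0.filter (fun h3 => bitZ (quantumSgn α h3) + bitZ (classicalSgn a h3) = 1) = {h1, h2} := by
          apply Finset.ext
          intro x
          simp only [Finset.mem_filter, Finset.mem_insert, Finset.mem_singleton]
          constructor
          · rintro ⟨hx, hPx⟩
            have hxM : x ∈ doilyLines.filter (fun h3 => bitZ (quantumSgn α h3) + bitZ (classicalSgn a h3) = 1) :=
              Finset.mem_filter.mpr ⟨Tsub.1 x hx, hPx⟩
            rw [hM] at hxM
            simpa using hxM
          · rintro (rfl|rfl)
            · exact ⟨m1, h1P⟩
            · exact ⟨m2, h2P⟩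
        rw [hT] at K0
        rw [Finset.card_pair hne12] at K0
        exact absurd K0 (by decide)
      · have hT : T1.filter (fun h3 => bitZ (quantumSgn α h3) + bitZ (classicalSgn a h3) = 1) = {h1, h2} := by
          apply Finset.ext
          intro x
          simp only [Finset.mem_filter, Finset.mem_insert, Finset.mem_singleton]
          constructor
          · rintro ⟨hx, hPx⟩
            have hxM : x ∈ doilyLines.filter (fun h3 => bitZ (quantumSgn α h3) + bitZ (classicalSgn a h3) = 1) :=
              Finset.mem_filter.mpr ⟨Tsub.2.1 x hx, hPx⟩
            rw [hM] at hxM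
            simpa using hxM
          · rintro (rfl|rfl)
            · exact ⟨m1, h1P⟩
            · exact ⟨m2, h2P⟩
        rw [hT] at K1
        rw [Finset.card_pair hne12] at K1
        exact absurd K1 (by decide)
      · have hT : T2.filter (fun h3 => bitZ (quantumSgn α h3) + bitZ (classicalSgn a h3) = 1) = {h1, h2} := by
          apply Finset.ext
          intro x
          simp only [Finset.mem_filter, Finset.mem_insert, Finset.mem_singleton]
          constructor
          · rintro ⟨hx, hPx⟩
            have hxM : x ∈ doilyLines.filter (fun h3 => bitZ (quantumSgn α h3) + bitZ (classicalSgn a h3) = 1) :=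
              Finset.mem_filter.mpr ⟨Tsub.2.2.1 x hx, hPx⟩
            rw [hM] at hxM
            simpa using hxM
          · rintro (rfl|rfl)
            · exact ⟨m1, h1P⟩
            · exact ⟨m2, h2P⟩
        rw [hT] at K2
        rw [Finset.card_pair hne12] at K2
        exact absurd K2 (by decide)
      · have hT : T3.filter (fun h3 => bitZ (quantumSgn α h3) + bitZ (classicalSgn a h3) = 1) = {h1, h2} := by
          apply Finset.ext
          intro x
          simp only [Finset.mem_filter, Finset.mem_insert, Finset.mem_singleton]
          constructor
          · rintro ⟨hx, hPx⟩
            have hxM : x ∈ doilyLines.filter (fun h3 => bitZ (quantumSgn α h3) + bitZ (classicalSgn a h3) = 1) :=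
              Finset.mem_filter.mpr ⟨Tsub.2.2.2.1 x hx, hPx⟩
            rw [hM] at hxM
            simpa using hxM
          · rintro (rfl|rfl)
            · exact ⟨m1, h1P⟩
            · exact ⟨m2, h2P⟩
        rw [hT] at K3
        rw [Finset.card_pair hne12] at K3
        exact absurd K3 (by decide)
      · have hT : T4.filter (fun h3 => bitZ (quantumSgn α h3) + bitZ (classicalSgn a h3) = 1) = {h1, h2} := by
          apply Finset.ext
          intro x
          simp only [Finset.mem_filter, Finset.mem_insert, Finset.mem_singleton]
          constructor
          · rintro ⟨hx, hPx⟩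
            have hxM : x ∈ doilyLines.filter (fun h3 => bitZ (quantumSgn α h3) + bitZ (classicalSgn a h3) = 1) :=
              Finset.mem_filter.mpr ⟨Tsub.2.2.2.2.1 x hx, hPx⟩
            rw [hM] at hxM
            simpa using hxM
          · rintro (rfl|rfl)
            · exact ⟨m1, h1P⟩
            · exact ⟨m2, h2P⟩
        rw [hT] at K4
        rw [Finset.card_pair hne12] at K4
        exact absurd K4 (by decide)
      · have hT : T5.filter (fun h3 => bitZ (quantumSgn α h3) + bitZ (classicalSgn a h3) = 1) = {h1, h2} := by
          apply Finset.ext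
          intro x
          simp only [Finset.mem_filter, Finset.mem_insert, Finset.mem_singleton]
          constructor
          · rintro ⟨hx, hPx⟩
            have hxM : x ∈ doilyLines.filter (fun h3 => bitZ (quantumSgn α h3) + bitZ (classicalSgn a h3) = 1) :=
              Finset.mem_filter.mpr ⟨Tsub.2.2.2.2.2 x hx, hPx⟩
            rw [hM] at hxM
            simpa using hxM
          · rintro (rfl|rfl)
            · exact ⟨m1, h1P⟩
            · exact ⟨m2, h2P⟩
        rw [hT] at K5
        rw [Finset.card_pair hne12] at K5
        exact absurd K5 (by decide)
  -- upper bound: explicit classical assignment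
  have capm2 : ∀ h0, classicalSgn (aaF (fun h0 => bitZ (quantumSgn α h0))) h0 = 1 ∨ classicalSgn (aaF (fun h0 => bitZ (quantumSgn α h0))) h0 = -1 :=
    csgn_pm _ (fun v => aaF_pm _ v)
  have E0 : bitZ (classicalSgn (aaF (fun h0 => bitZ (quantumSgn α h0))) ({1,2,3} : Finset ℕ)) = bitZ (quantumSgn α ({1,2,3} : Finset ℕ)) := by
    rw [bit_csgn3 _ (fun v => aaF_pm _ v) (show (1:ℕ) < 2 by norm_num) (show (2:ℕ) < 3 by norm_num), bit_aaF, bit_aaF, bit_aaF]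
    norm_num [bbF]
    linear_combination (bitZ (quantumSgn α ({1,10,11} : Finset ℕ)) + bitZ (quantumSgn α ({3,13,14} : Finset ℕ))) * two_zmod
  have E1 : bitZ (classicalSgn (aaF (fun h0 => bitZ (quantumSgn α h0))) ({1,8,9} : Finset ℕ)) = bitZ (quantumSgn α ({1,8,9} : Finset ℕ)) := by
    rw [bit_csgn3 _ (fun v => aaF_pm _ v) (show (1:ℕ) < 8 by norm_num) (show (8:ℕ) < 9 by norm_num), bit_aaF, bit_aaF, bit_aaF]
    norm_num [bbF]
    linear_combination ((1 : ZMod 2) + bitZ (quantumSgn α ({1,10,11} : Finset ℕ)) + bitZ (quantumSgn α ({3,12,15} : Finset ℕ)) + bitZ (quantumSgn α ({3,13,14} : Finset ℕ)) + bitZ (quantumSgn α ({4,8,12} : Finset ℕ)) + bitZ (quantumSgn α ({4,10,14} : Finset ℕ))) * two_zmod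
  have E2 : bitZ (classicalSgn (aaF (fun h0 => bitZ (quantumSgn α h0))) ({1,10,11} : Finset ℕ)) = bitZ (quantumSgn α ({1,10,11} : Finset ℕ)) := by
    rw [bit_csgn3 _ (fun v => aaF_pm _ v) (show (1:ℕ) < 10 by norm_num) (show (10:ℕ) < 11 by norm_num), bit_aaF, bit_aaF, bit_aaF]
    norm_num [bbF]
  have E3 : bitZ (classicalSgn (aaF (fun h0 => bitZ (quantumSgn α h0))) ({2,4,6} : Finset ℕ)) = bitZ (quantumSgn α ({2,4,6} : Finset ℕ)) := by
    rw [bit_csgn3 _ (fun v => aaF_pm _ v) (show (2:ℕ) < 4 by norm_num) (show (4:ℕ) < 6 by norm_num), bit_aaF, bit_aaF, bit_aaF]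
    norm_num [bbF]
    linear_combination (bitZ (quantumSgn α ({1,2,3} : Finset ℕ)) + bitZ (quantumSgn α ({1,10,11} : Finset ℕ)) + bitZ (quantumSgn α ({3,13,14} : Finset ℕ)) + bitZ (quantumSgn α ({4,10,14} : Finset ℕ))) * two_zmod
  have E4 : bitZ (classicalSgn (aaF (fun h0 => bitZ (quantumSgn α h0))) ({2,5,7} : Finset ℕ)) = bitZ (quantumSgn α ({2,5,7} : Finset ℕ)) := by
    rw [bit_csgn3 _ (fun v => aaF_pm _ v) (show (2:ℕ) < 5 by norm_num) (show (5:ℕ) < 7 by norm_num), bit_aaF, bit_aaF, bit_aaF]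
    norm_num [bbF]
    linear_combination ((1 : ZMod 2) + bitZ (quantumSgn α ({1,2,3} : Finset ℕ)) + bitZ (quantumSgn α ({1,10,11} : Finset ℕ)) + bitZ (quantumSgn α ({3,12,15} : Finset ℕ)) + bitZ (quantumSgn α ({3,13,14} : Finset ℕ)) + bitZ (quantumSgn α ({4,8,12} : Finset ℕ)) + bitZ (quantumSgn α ({4,10,14} : Finset ℕ)) + bitZ (quantumSgn α ({5,8,13} : Finset ℕ))) * two_zmod
  have E5 : bitZ (classicalSgn (aaF (fun h0 => bitZ (quantumSgn α h0))) ({3,12,15} : Finset ℕ)) = bitZ (quantumSgn α ({3,12,15} : Finset ℕ)) + 1 := by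
    rw [bit_csgn3 _ (fun v => aaF_pm _ v) (show (3:ℕ) < 12 by norm_num) (show (12:ℕ) < 15 by norm_num), bit_aaF, bit_aaF, bit_aaF]
    norm_num [bbF]
    linear_combination (bitZ (quantumSgn α ({3,13,14} : Finset ℕ))) * two_zmod
  have E6 : bitZ (classicalSgn (aaF (fun h0 => bitZ (quantumSgn α h0))) ({3,13,14} : Finset ℕ)) = bitZ (quantumSgn α ({3,13,14} : Finset ℕ)) := by
    rw [bit_csgn3 _ (fun v => aaF_pm _ v) (show (3:ℕ) < 13 by norm_num) (show (13:ℕ) < 14 by norm_num), bit_aaF, bit_aaF, bit_aaF]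
    norm_num [bbF]
  have E7 : bitZ (classicalSgn (aaF (fun h0 => bitZ (quantumSgn α h0))) ({4,8,12} : Finset ℕ)) = bitZ (quantumSgn α ({4,8,12} : Finset ℕ)) := by
    rw [bit_csgn3 _ (fun v => aaF_pm _ v) (show (4:ℕ) < 8 by norm_num) (show (8:ℕ) < 12 by norm_num), bit_aaF, bit_aaF, bit_aaF]
    norm_num [bbF]
    linear_combination ((1 : ZMod 2) + bitZ (quantumSgn α ({3,12,15} : Finset ℕ)) + bitZ (quantumSgn α ({3,13,14} : Finset ℕ)) + bitZ (quantumSgn α ({4,10,14} : Finset ℕ))) * two_zmod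
  have E8 : bitZ (classicalSgn (aaF (fun h0 => bitZ (quantumSgn α h0))) ({4,10,14} : Finset ℕ)) = bitZ (quantumSgn α ({4,10,14} : Finset ℕ)) := by
    rw [bit_csgn3 _ (fun v => aaF_pm _ v) (show (4:ℕ) < 10 by norm_num) (show (10:ℕ) < 14 by norm_num), bit_aaF, bit_aaF, bit_aaF]
    norm_num [bbF]
  have E9 : bitZ (classicalSgn (aaF (fun h0 => bitZ (quantumSgn α h0))) ({5,8,13} : Finset ℕ)) = bitZ (quantumSgn α ({5,8,13} : Finset ℕ)) := by
    rw [bit_csgn3 _ (fun v => aaF_pm _ v) (show (5:ℕ) < 8 by norm_num) (show (8:ℕ) < 13 by norm_num), bit_aaF, bit_aaF, bit_aaF]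
    norm_num [bbF]
    linear_combination ((1 : ZMod 2) + bitZ (quantumSgn α ({3,12,15} : Finset ℕ)) + bitZ (quantumSgn α ({3,13,14} : Finset ℕ)) + bitZ (quantumSgn α ({4,8,12} : Finset ℕ)) + bitZ (quantumSgn α ({4,10,14} : Finset ℕ))) * two_zmod
  have E10 : bitZ (classicalSgn (aaF (fun h0 => bitZ (quantumSgn α h0))) ({5,10,15} : Finset ℕ)) = bitZ (quantumSgn α ({5,10,15} : Finset ℕ)) := by
    rw [bit_csgn3 _ (fun v => aaF_pm _ v) (show (5:ℕ) < 10 by norm_num) (show (10:ℕ) < 15 by norm_num), bit_aaF, bit_aaF, bit_aaF]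
    norm_num [bbF]
    linear_combination Wb0 + Wb2 + Wb5 + ((2 : ZMod 2) + (- bitZ (quantumSgn α ({1,2,3} : Finset ℕ))) + (- bitZ (quantumSgn α ({1,8,9} : Finset ℕ))) + (- bitZ (quantumSgn α ({1,10,11} : Finset ℕ))) + (- bitZ (quantumSgn α ({2,4,6} : Finset ℕ))) + (- bitZ (quantumSgn α ({2,5,7} : Finset ℕ))) + (- bitZ (quantumSgn α ({3,12,15} : Finset ℕ))) + (- bitZ (quantumSgn α ({4,10,14} : Finset ℕ))) + (- bitZ (quantumSgn α ({5,8,13} : Finset ℕ))) + (- bitZ (quantumSgn α ({5,10,15} : Finset ℕ))) + (- bitZ (quantumSgn α ({6,9,15} : Finset ℕ))) + (- bitZ (quantumSgn α ({6,11,13} : Finset ℕ))) + (- bitZ (quantumSgn α ({7,9,14} : Finset ℕ))) + (- bitZ (quantumSgn α ({7,11,12} : Finset ℕ)))) * two_zmod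
  have E11 : bitZ (classicalSgn (aaF (fun h0 => bitZ (quantumSgn α h0))) ({6,9,15} : Finset ℕ)) = bitZ (quantumSgn α ({6,9,15} : Finset ℕ)) := by
    rw [bit_csgn3 _ (fun v => aaF_pm _ v) (show (6:ℕ) < 9 by norm_num) (show (9:ℕ) < 15 by norm_num), bit_aaF, bit_aaF, bit_aaF]
    norm_num [bbF]
    linear_combination Wb0 + Wb1 + Wb5 + ((2 : ZMod 2) + (- bitZ (quantumSgn α ({1,8,9} : Finset ℕ))) + (- bitZ (quantumSgn α ({2,4,6} : Finset ℕ))) + (- bitZ (quantumSgn α ({2,5,7} : Finset ℕ))) + (- bitZ (quantumSgn α ({3,12,15} : Finset ℕ))) + (- bitZ (quantumSgn α ({5,8,13} : Finset ℕ))) + (- bitZ (quantumSgn α ({5,10,15} : Finset ℕ))) + (- bitZ (quantumSgn α ({6,9,15} : Finset ℕ))) + (- bitZ (quantumSgn α ({6,11,13} : Finset ℕ))) + (- bitZ (quantumSgn α ({7,9,14} : Finset ℕ))) + (- bitZ (quantumSgn α ({7,11,12} : Finset ℕ)))) * two_zmod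
  have E12 : bitZ (classicalSgn (aaF (fun h0 => bitZ (quantumSgn α h0))) ({6,11,13} : Finset ℕ)) = bitZ (quantumSgn α ({6,11,13} : Finset ℕ)) + 1 := by
    rw [bit_csgn3 _ (fun v => aaF_pm _ v) (show (6:ℕ) < 11 by norm_num) (show (11:ℕ) < 13 by norm_num), bit_aaF, bit_aaF, bit_aaF]
    norm_num [bbF]
    linear_combination Wb0 + Wb1 + Wb3 + ((1 : ZMod 2) + (- bitZ (quantumSgn α ({1,8,9} : Finset ℕ))) + (- bitZ (quantumSgn α ({1,10,11} : Finset ℕ))) + (- bitZ (quantumSgn α ({2,4,6} : Finset ℕ))) + (- bitZ (quantumSgn α ({2,5,7} : Finset ℕ))) + (- bitZ (quantumSgn α ({3,12,15} : Finset ℕ))) + (- bitZ (quantumSgn α ({3,13,14} : Finset ℕ))) + (- bitZ (quantumSgn α ({4,8,12} : Finset ℕ))) + (- bitZ (quantumSgn α ({5,8,13} : Finset ℕ))) + (- bitZ (quantumSgn α ({5,10,15} : Finset ℕ))) + (- bitZ (quantumSgn α ({6,9,15} : Finset ℕ))) + (- bitZ (quantumSgn α ({6,11,13} : Finset ℕ)))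 + (- bitZ (quantumSgn α ({7,9,14} : Finset ℕ))) + (- bitZ (quantumSgn α ({7,11,12} : Finset ℕ)))) * two_zmod
  have E13 : bitZ (classicalSgn (aaF (fun h0 => bitZ (quantumSgn α h0))) ({7,9,14} : Finset ℕ)) = bitZ (quantumSgn α ({7,9,14} : Finset ℕ)) + 1 := by
    rw [bit_csgn3 _ (fun v => aaF_pm _ v) (show (7:ℕ) < 9 by norm_num) (show (9:ℕ) < 14 by norm_num), bit_aaF, bit_aaF, bit_aaF]
    norm_num [bbF]
    linear_combination Wb0 + Wb1 + Wb4 + ((2 : ZMod 2) + (- bitZ (quantumSgn α ({1,8,9} : Finset ℕ))) + (- bitZ (quantumSgn α ({2,4,6} : Finset ℕ))) + (- bitZ (quantumSgn α ({2,5,7} : Finset ℕ))) + (- bitZ (quantumSgn α ({3,13,14} : Finset ℕ))) + (- bitZ (quantumSgn α ({5,10,15} : Finset ℕ))) + (- bitZ (quantumSgn α ({6,9,15} : Finset ℕ))) + (- bitZ (quantumSgn α ({6,11,13} : Finset ℕ))) + (- bitZ (quantumSgn α ({7,9,14} : Finset ℕ))) + (- bitZ (quantumSgn α ({7,11,12}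 : Finset ℕ)))) * two_zmod
  have E14 : bitZ (classicalSgn (aaF (fun h0 => bitZ (quantumSgn α h0))) ({7,11,12} : Finset ℕ)) = bitZ (quantumSgn α ({7,11,12} : Finset ℕ)) := by
    rw [bit_csgn3 _ (fun v => aaF_pm _ v) (show (7:ℕ) < 11 by norm_num) (show (11:ℕ) < 12 by norm_num), bit_aaF, bit_aaF, bit_aaF]
    norm_num [bbF]
    linear_combination Wb1 + Wb5 + ((2 : ZMod 2) + (- bitZ (quantumSgn α ({1,8,9} : Finset ℕ))) + (- bitZ (quantumSgn α ({2,4,6} : Finset ℕ))) + (- bitZ (quantumSgn α ({5,10,15} : Finset ℕ))) + (- bitZ (quantumSgn α ({6,11,13} : Finset ℕ))) + (- bitZ (quantumSgn α ({7,9,14} : Finset ℕ))) + (- bitZ (quantumSgn α ({7,11,12} : Finset ℕ)))) * two_zmod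
  have F0 : quantumSgn α ({1,2,3} : Finset ℕ) = classicalSgn (aaF (fun h0 => bitZ (quantumSgn α h0))) ({1,2,3} : Finset ℕ) := by
    rw [pm_eq_iff (qsgn_pm α _) (capm2 _), E0]
    linear_combination bitZ (quantumSgn α ({1,2,3} : Finset ℕ)) * two_zmod
  have F1 : quantumSgn α ({1,8,9} : Finset ℕ) = classicalSgn (aaF (fun h0 => bitZ (quantumSgn α h0))) ({1,8,9} : Finset ℕ) := by
    rw [pm_eq_iff (qsgn_pm α _) (capm2 _), E1]
    linear_combination bitZ (quantumSgn α ({1,8,9} : Finset ℕ)) * two_zmod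
  have F2 : quantumSgn α ({1,10,11} : Finset ℕ) = classicalSgn (aaF (fun h0 => bitZ (quantumSgn α h0))) ({1,10,11} : Finset ℕ) := by
    rw [pm_eq_iff (qsgn_pm α _) (capm2 _), E2]
    linear_combination bitZ (quantumSgn α ({1,10,11} : Finset ℕ)) * two_zmod
  have F3 : quantumSgn α ({2,4,6} : Finset ℕ) = classicalSgn (aaF (fun h0 => bitZ (quantumSgn α h0))) ({2,4,6} : Finset ℕ) := by
    rw [pm_eq_iff (qsgn_pm α _) (capm2 _), E3]
    linear_combination bitZ (quantumSgn α ({2,4,6} : Finset ℕ)) * two_zmod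
  have F4 : quantumSgn α ({2,5,7} : Finset ℕ) = classicalSgn (aaF (fun h0 => bitZ (quantumSgn α h0))) ({2,5,7} : Finset ℕ) := by
    rw [pm_eq_iff (qsgn_pm α _) (capm2 _), E4]
    linear_combination bitZ (quantumSgn α ({2,5,7} : Finset ℕ)) * two_zmod
  have F5 : quantumSgn α ({3,12,15} : Finset ℕ) ≠ classicalSgn (aaF (fun h0 => bitZ (quantumSgn α h0))) ({3,12,15} : Finset ℕ) := by
    rw [pm_ne_iff (qsgn_pm α _) (capm2 _), E5]
    linear_combination bitZ (quantumSgn α ({3,12,15} : Finset ℕ)) * two_zmod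
  have F6 : quantumSgn α ({3,13,14} : Finset ℕ) = classicalSgn (aaF (fun h0 => bitZ (quantumSgn α h0))) ({3,13,14} : Finset ℕ) := by
    rw [pm_eq_iff (qsgn_pm α _) (capm2 _), E6]
    linear_combination bitZ (quantumSgn α ({3,13,14} : Finset ℕ)) * two_zmod
  have F7 : quantumSgn α ({4,8,12} : Finset ℕ) = classicalSgn (aaF (fun h0 => bitZ (quantumSgn α h0))) ({4,8,12} : Finset ℕ) := by
    rw [pm_eq_iff (qsgn_pm α _) (capm2 _), E7]
    linear_combination bitZ (quantumSgn α ({4,8,12} : Finset ℕ)) * two_zmod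
  have F8 : quantumSgn α ({4,10,14} : Finset ℕ) = classicalSgn (aaF (fun h0 => bitZ (quantumSgn α h0))) ({4,10,14} : Finset ℕ) := by
    rw [pm_eq_iff (qsgn_pm α _) (capm2 _), E8]
    linear_combination bitZ (quantumSgn α ({4,10,14} : Finset ℕ)) * two_zmod
  have F9 : quantumSgn α ({5,8,13} : Finset ℕ) = classicalSgn (aaF (fun h0 => bitZ (quantumSgn α h0))) ({5,8,13} : Finset ℕ) := by
    rw [pm_eq_iff (qsgn_pm α _) (capm2 _), E9]
    linear_combination bitZ (quantumSgn α ({5,8,13} : Finset ℕ)) * two_zmod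
  have F10 : quantumSgn α ({5,10,15} : Finset ℕ) = classicalSgn (aaF (fun h0 => bitZ (quantumSgn α h0))) ({5,10,15} : Finset ℕ) := by
    rw [pm_eq_iff (qsgn_pm α _) (capm2 _), E10]
    linear_combination bitZ (quantumSgn α ({5,10,15} : Finset ℕ)) * two_zmod
  have F11 : quantumSgn α ({6,9,15} : Finset ℕ) = classicalSgn (aaF (fun h0 => bitZ (quantumSgn α h0))) ({6,9,15} : Finset ℕ) := by
    rw [pm_eq_iff (qsgn_pm α _) (capm2 _), E11]
    linear_combination bitZ (quantumSgn α ({6,9,15} : Finset ℕ)) * two_zmod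
  have F12 : quantumSgn α ({6,11,13} : Finset ℕ) ≠ classicalSgn (aaF (fun h0 => bitZ (quantumSgn α h0))) ({6,11,13} : Finset ℕ) := by
    rw [pm_ne_iff (qsgn_pm α _) (capm2 _), E12]
    linear_combination bitZ (quantumSgn α ({6,11,13} : Finset ℕ)) * two_zmod
  have F13 : quantumSgn α ({7,9,14} : Finset ℕ) ≠ classicalSgn (aaF (fun h0 => bitZ (quantumSgn α h0))) ({7,9,14} : Finset ℕ) := by
    rw [pm_ne_iff (qsgn_pm α _) (capm2 _), E13]
    linear_combination bitZ (quantumSgn α ({7,9,14} : Finset ℕ)) * two_zmod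
  have F14 : quantumSgn α ({7,11,12} : Finset ℕ) = classicalSgn (aaF (fun h0 => bitZ (quantumSgn α h0))) ({7,11,12} : Finset ℕ) := by
    rw [pm_eq_iff (qsgn_pm α _) (capm2 _), E14]
    linear_combination bitZ (quantumSgn α ({7,11,12} : Finset ℕ)) * two_zmod
  have Mset : doilyLines.filter (fun h0 => quantumSgn α h0 ≠ classicalSgn (aaF (fun h0 => bitZ (quantumSgn α h0))) h0)
      = ({ {3,12,15}, {6,11,13}, {7,9,14} } : Finset (Finset ℕ)) := by
    apply Finset.ext
    intro h0
    simp only [Finset.mem_filter, Finset.mem_insert, Finset.mem_singleton]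
    constructor
    · rintro ⟨hml, hne1⟩
      simp only [doilyLines, Finset.mem_insert, Finset.mem_singleton] at hml
      rcases hml with rfl|rfl|rfl|rfl|rfl|rfl|rfl|rfl|rfl|rfl|rfl|rfl|rfl|rfl|rfl
      · exact absurd F0 hne1
      · exact absurd F1 hne1
      · exact absurd F2 hne1
      · exact absurd F3 hne1
      · exact absurd F4 hne1
      · left; rfl
      · exact absurd F6 hne1
      · exact absurd F7 hne1
      · exact absurd F8 hne1
      · exact absurd F9 hne1
      · exact absurd F10 hne1
      · exact absurd F11 hne1
      · right; left; rfl
      · right; right; rfl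
      · exact absurd F14 hne1
    · rintro (rfl|rfl|rfl)
      · exact ⟨by decide, F5⟩
      · exact ⟨by decide, F12⟩
      · exact ⟨by decide, F13⟩
  have mem3 : 3 ∈ {d : ℕ | ∃ a : ℕ → ℤ, (∀ v, a v = 1 ∨ a v = -1) ∧
      d = (doilyLines.filter (fun h0 => quantumSgn α h0 ≠ classicalSgn a h0)).card} := by
    refine ⟨aaF (fun h0 => bitZ (quantumSgn α h0)), fun v => aaF_pm _ v, ?_⟩
    rw [Mset]
    decide
  unfold contextualityDegree
  apply le_antisymm
  · exact Nat.sInf_le mem3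
  · apply le_csInf ⟨3, mem3⟩
    rintro d ⟨a, hapm, rfl⟩
    exact lower a hapm

end
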